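/- arXiv:2006.13476 — 7 statements merged into one kernel-verified Lean document; each statement's English description precedes it below -/
import Mathlib

section
/- Let F : ℝ^d → ℝ be differentiable with L₁-Lipschitz gradient. Let x, g ∈ ℝ^d, let 0 < η ≤ 1/(2L₁), and set y := x − η·g. Then F(x) − F(y) ≥ (η/8)·‖∇F(x)‖² − (3η/4)·‖∇F(x) − g‖². -/
open scoped RealInnerProductSpace

/-- Descent lemma for an inexact gradient step: if `F` has an
`L₁`-Lipschitz gradient, `0 < η ≤ 1/(2L₁)` and `y = x - η • g`, then
`F x - F y ≥ (η/8)‖∇F(x)‖² - (3η/4)‖∇F(x) - g‖²`. -/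
theorem stmt_0 {d : ℕ} (F : EuclideanSpace ℝ (Fin d) → ℝ)
    (gradF : EuclideanSpace ℝ (Fin d) → EuclideanSpace ℝ (Fin d)) (L₁ : ℝ)
    (hgrad : ∀ z, HasGradientAt F (gradF z) z)
    (hlip : ∀ z w, ‖gradF z - gradF w‖ ≤ L₁ * ‖z - w‖)
    (x g : EuclideanSpace ℝ (Fin d)) (η : ℝ) (hη₀ : 0 < η) (hη : η ≤ 1 / (2 * L₁))
    (y : EuclideanSpace ℝ (Fin d)) (hy : y = x - η • g) :
    F x - F y ≥ η / 8 * ‖gradF x‖ ^ 2 - 3 * η / 4 * ‖gradF x - g‖ ^ 2 := by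
  set L : ℝ := max L₁ 0 with hLdef
  have hL0 : 0 ≤ L := le_max_right _ _
  have hlip' : ∀ z w, ‖gradF z - gradF w‖ ≤ L * ‖z - w‖ := fun z w =>
    (hlip z w).trans (by gcongr; exact le_max_left _ _)
  have hηL : η * L ≤ 1 / 2 := by
    rcases le_or_gt L₁ 0 with h | h
    · have : L = max L₁ 0 := hLdef
      rcases max_cases L₁ 0 with ⟨he, _⟩ | ⟨he, _⟩
      · nlinarith
      · rw [hLdef, he]; norm_num
    · have hLeq : L = L₁ := max_eq_left h.le
      rw [hLeq]
      rw [div_eq_inv_mul, le_inv_mul_iff₀ (by positivity)] at hη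
      nlinarith
  -- descent-type bound without the factor 1/2
  set f : EuclideanSpace ℝ (Fin d) → ℝ := fun z => F z - ⟪gradF x, z⟫ with hfdef
  have key : ‖f y - f x‖ ≤ (L * ‖y - x‖) * ‖y - x‖ := by
    refine Convex.norm_image_sub_le_of_norm_hasFDerivWithin_le
      (f' := fun z => (InnerProductSpace.toDual ℝ _ (gradF z - gradF x) : _ →L[ℝ] ℝ))
      (s := segment ℝ x y) ?_ ?_ (convex_segment x y) (left_mem_segment ℝ x y)
      (right_mem_segment ℝ x y)
    · intro z hz
      have h1 : HasFDerivAt F (InnerProductSpace.toDual ℝ _ (gradF z)) z :=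
        (hasGradientAt_iff_hasFDerivAt).mp (hgrad z)
      have h2 : HasFDerivAt (fun w : EuclideanSpace ℝ (Fin d) => ⟪gradF x, w⟫)
          (InnerProductSpace.toDual ℝ _ (gradF x)) z := by
        convert (InnerProductSpace.toDual ℝ (EuclideanSpace ℝ (Fin d)) (gradF x)).hasFDerivAt using 1
        ext w
        simp [InnerProductSpace.toDual_apply_apply]
      have := (h1.sub h2).hasFDerivWithinAt (s := segment ℝ x y)
      convert this using 1
      ext v
      simp [InnerProductSpace.toDual_apply_apply, inner_sub_left]
      rfl
      exact map_sub (InnerProductSpace.toDual ℝ (EuclideanSpace ℝ (Fin d))) _ _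
    · intro z hz
      have hzx : ‖z - x‖ ≤ ‖y - x‖ := by
        obtain ⟨a, b, ha, hb, hab, rfl⟩ := hz
        have : a • x + b • y - x = b • (y - x) := by
          have hax : a = 1 - b := by linarith
          rw [hax]; module
        rw [this, norm_smul]
        simp only [Real.norm_eq_abs, abs_of_nonneg hb]
        nlinarith [norm_nonneg (y - x)]
      calc ‖(InnerProductSpace.toDual ℝ _ (gradF z - gradF x) : _ →L[ℝ] ℝ)‖
          = ‖gradF z - gradF x‖ := (InnerProductSpace.toDual ℝ _).norm_map _
        _ ≤ L * ‖z - x‖ := hlip' z x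
        _ ≤ L * ‖y - x‖ := by gcongr
  have hyx : y - x = -(η • g) := by rw [hy]; abel
  have hnyx : ‖y - x‖ = η * ‖g‖ := by
    rw [hyx, norm_neg, norm_smul, Real.norm_eq_abs, abs_of_pos hη₀]
  have hinner : ⟪gradF x, y⟫ - ⟪gradF x, x⟫ = -(η * ⟪gradF x, g⟫) := by
    rw [← inner_sub_right, hyx, inner_neg_right, real_inner_smul_right]
  have hkey2 : F x - F y ≥ η * ⟪gradF x, g⟫ - L * (η * ‖g‖) * (η * ‖g‖) := by
    have habs := abs_le.mp (by rwa [Real.norm_eq_abs] at key)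
    simp only [hfdef] at habs
    rw [hnyx] at habs
    nlinarith [habs.1, habs.2, hinner]
  have hsq : ‖gradF x - g‖ ^ 2 = ‖gradF x‖ ^ 2 - 2 * ⟪gradF x, g⟫ + ‖g‖ ^ 2 := by
    rw [norm_sub_sq_real]
  have hg2 : (0:ℝ) ≤ ‖g‖ ^ 2 := sq_nonneg _
  nlinarith [hkey2, hsq, hg2, sq_nonneg (‖gradF x‖), mul_le_mul_of_nonneg_right hηL
    (mul_nonneg hη₀.le hg2)]
end

section
/- Let F : ℝ^d → ℝ be twice differentiable with L₂-Lipschitz Hessian. Fix x, g ∈ ℝ^d, a symmetric matrix H ∈ ℝ^{d×d}, M ≥ 4L₂ and η ≥ 0. Define m_x(y) := F(x) + ⟨g, y − x⟩ + (1/2)⟨y − x, H(y − x)⟩ + (M/6)‖y − x‖³, and let y be a minimizer of m_x over the closed Euclidean ball of radius η centered at x. Then F(x) − F(y) ≥ (M/12)·‖y − x‖³ − (8/√M)·‖∇F(x) − g‖^{3/2} − (4η^{3/2}/√M)·‖∇²F(x) − H‖_op^{3/2}. -/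
open scoped RealInnerProductSpace

private lemma aux_taylor {d : ℕ} (F : EuclideanSpace ℝ (Fin d) → ℝ)
    (gradF : EuclideanSpace ℝ (Fin d) → EuclideanSpace ℝ (Fin d))
    (hessF : EuclideanSpace ℝ (Fin d) →
      EuclideanSpace ℝ (Fin d) →L[ℝ] EuclideanSpace ℝ (Fin d))
    (L₂ : ℝ)
    (hgrad : ∀ z, HasGradientAt F (gradF z) z)
    (hhess : ∀ z, HasFDerivAt gradF (hessF z) z)
    (hlip : ∀ z w, ‖hessF z - hessF w‖ ≤ L₂ * ‖z - w‖)
    (x y : EuclideanSpace ℝ (Fin d)) :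
    F y ≤ F x + ⟪gradF x, y - x⟫ + 1/2 * ⟪hessF x (y - x), y - x⟫
      + L₂/6 * ‖y - x‖^3 := by
  set s := y - x with hs
  set r := ‖s‖ with hrdef
  set c : ℝ → EuclideanSpace ℝ (Fin d) := fun t => x + t • s with hcdef
  have hc0 : c 0 = x := by simp [hcdef]
  have hc1 : c 1 = y := by simp [hcdef, hs]
  have hcd : ∀ t : ℝ, HasDerivAt c s t := by
    intro t; have h := ((hasDerivAt_id t).smul_const s).const_add x; simp only [one_smul] at h; exact h
  set ψ : ℝ → ℝ := fun t => ⟪gradF (c t), s⟫ with hψdef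
  set χ : ℝ → ℝ := fun t => ⟪hessF (c t) s, s⟫ with hχdef
  have hφ : ∀ t : ℝ, HasDerivAt (fun u => F (c u)) (ψ t) t := by
    intro t
    have := (hgrad (c t)).hasFDerivAt.comp_hasDerivAt t (hcd t)
    simp [hψdef, InnerProductSpace.toDual_apply_apply] at this; exact this
  have hψ : ∀ t : ℝ, HasDerivAt ψ (χ t) t := by
    intro t
    have h1 : HasDerivAt (fun u => gradF (c u)) (hessF (c t) s) t :=
      (hhess (c t)).comp_hasDerivAt t (hcd t)
    simpa [hψdef, hχdef] using h1.inner ℝ (hasDerivAt_const t s)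
  have hχb : ∀ t : ℝ, 0 ≤ t → χ t - χ 0 ≤ L₂ * t * r^3 := by
    intro t ht
    have h1 : χ t - χ 0 = ⟪(hessF (c t) - hessF x) s, s⟫ := by
      simp [hχdef, hc0, ContinuousLinearMap.sub_apply, inner_sub_left]
    have h2 : ⟪(hessF (c t) - hessF x) s, s⟫ ≤ ‖(hessF (c t) - hessF x) s‖ * ‖s‖ :=
      real_inner_le_norm _ _
    have h3 : ‖(hessF (c t) - hessF x) s‖ ≤ ‖hessF (c t) - hessF x‖ * ‖s‖ :=
      (hessF (c t) - hessF x).le_opNorm s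
    have h4 : ‖hessF (c t) - hessF x‖ ≤ L₂ * (t * r) := by
      have := hlip (c t) x
      have hctx : ‖c t - x‖ = t * r := by
        simp [hcdef, norm_smul, abs_of_nonneg ht, hrdef]
      rw [hctx] at this; linarith
    have hrn : (0 : ℝ) ≤ r := norm_nonneg _
    have h5 := mul_le_mul_of_nonneg_right h3 hrn
    have h6 := mul_le_mul_of_nonneg_right (mul_le_mul_of_nonneg_right h4 hrn) hrn
    nlinarith [norm_nonneg ((hessF (c t) - hessF x) s)]
  set q : ℝ → ℝ := fun t => ψ t - ψ 0 - t * χ 0 - L₂ * r^3 * t^2 / 2 with hqdef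
  have hq : ∀ t : ℝ, HasDerivAt q (χ t - χ 0 - L₂ * r^3 * t) t := by
    intro t
    have : HasDerivAt q (χ t - (χ 0) - L₂ * r^3 * (2 * t^1) / 2) t := by
      exact (((hψ t).sub_const (ψ 0)).sub
        ((hasDerivAt_id t).mul_const (χ 0) |>.congr_deriv (one_mul _))).sub
        (((hasDerivAt_pow 2 t).const_mul (L₂ * r^3)).div_const 2)
    convert this using 1; ring
  have hqanti : AntitoneOn q (Set.Icc 0 1) := by
    apply antitoneOn_of_deriv_nonpos (convex_Icc 0 1)
    · exact fun t _ => ((hq t).continuousAt).continuousWithinAt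
    · exact fun t _ => ((hq t).differentiableAt).differentiableWithinAt
    · intro t ht
      rw [interior_Icc] at ht
      rw [(hq t).deriv]
      have := hχb t ht.1.le
      nlinarith
  have hq0 : q 0 = 0 := by simp [hqdef]
  have hqle : ∀ t ∈ Set.Icc (0:ℝ) 1, q t ≤ 0 := by
    intro t ht
    have := hqanti (Set.left_mem_Icc.2 zero_le_one) ht ht.1
    rw [hq0] at this; exact this
  set p : ℝ → ℝ := fun t => F (c t) - F (c 0) - t * ψ 0 - t^2/2 * χ 0 - L₂ * r^3 * t^3 / 6
    with hpdef
  have hp : ∀ t : ℝ, HasDerivAt p (q t) t := by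
    intro t
    have : HasDerivAt p (ψ t - 0 - 1 * ψ 0 - (2 * t^1)/2 * χ 0 - L₂ * r^3 * (3 * t^2) / 6) t := by
      exact (((((hφ t)).sub (hasDerivAt_const t (F (c 0)))).sub
        ((hasDerivAt_id t).mul_const (ψ 0) |>.congr_deriv rfl)).sub
        (((hasDerivAt_pow 2 t).div_const 2).mul_const (χ 0))).sub
        (((hasDerivAt_pow 3 t).const_mul (L₂ * r^3)).div_const 6)
    convert this using 1; simp [hqdef]; ring
  have hpanti : AntitoneOn p (Set.Icc 0 1) := by
    apply antitoneOn_of_deriv_nonpos (convex_Icc 0 1)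
    · exact fun t _ => ((hp t).continuousAt).continuousWithinAt
    · exact fun t _ => ((hp t).differentiableAt).differentiableWithinAt
    · intro t ht
      rw [interior_Icc] at ht
      rw [(hp t).deriv]
      exact hqle t ⟨ht.1.le, ht.2.le⟩
  have hp10 : p 1 ≤ p 0 :=
    hpanti (Set.left_mem_Icc.2 zero_le_one) (Set.right_mem_Icc.2 zero_le_one) zero_le_one
  have hp0 : p 0 = 0 := by simp [hpdef]
  rw [hp0] at hp10
  have hp1 : p 1 = F y - F x - ψ 0 - χ 0 / 2 - L₂ * r^3 / 6 := by
    simp [hpdef, hc0, hc1]; ring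
  have hψ0 : ψ 0 = ⟪gradF x, s⟫ := by simp [hψdef, hc0]
  have hχ0 : χ 0 = ⟪hessF x s, s⟫ := by simp [hχdef, hc0]
  rw [hp1, hψ0, hχ0] at hp10
  linarith

private lemma aux_rpow32 {a : ℝ} (ha : 0 ≤ a) : a ^ ((3:ℝ)/2) = a * Real.sqrt a := by
  rcases eq_or_lt_of_le ha with h | h
  · rw [← h, Real.zero_rpow (by norm_num)]; simp
  · rw [show (3:ℝ)/2 = 1 + 1/2 by norm_num, Real.rpow_add h, Real.rpow_one,
      Real.sqrt_eq_rpow]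

private lemma aux_ineq1 (M r δ : ℝ) (hM : 0 < M) (hr : 0 ≤ r) (hδ : 0 ≤ δ) :
    δ * r ≤ M/48 * r^3 + 8 / Real.sqrt M * (δ * Real.sqrt δ) := by
  set sM := Real.sqrt M with hsMdef
  set sδ := Real.sqrt δ with hsδdef
  have hsM : 0 < sM := Real.sqrt_pos.2 hM
  have hsM2 : sM^2 = M := Real.sq_sqrt hM.le
  have hsδ : 0 ≤ sδ := Real.sqrt_nonneg δ
  have hsδ2 : sδ^2 = δ := Real.sq_sqrt hδ
  rcases le_or_gt (48 * δ) (M * r^2) with h | h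
  · have h1 : δ * r ≤ M/48 * r^3 := by nlinarith [mul_le_mul_of_nonneg_right h hr]
    have h2 : 0 ≤ 8/sM * (δ * sδ) := by positivity
    linarith
  · have h1 : (r*sM)^2 ≤ (8*sδ)^2 := by
      have e1 : (r*sM)^2 = M * r^2 := by rw [mul_pow, hsM2]; ring
      have e2 : (8*sδ)^2 = 64 * δ := by rw [mul_pow, hsδ2]; ring
      rw [e1, e2]; linarith
    have key : r * sM ≤ 8 * sδ := by
      calc r*sM = Real.sqrt ((r*sM)^2) := (Real.sqrt_sq (by positivity)).symm
        _ ≤ Real.sqrt ((8*sδ)^2) := Real.sqrt_le_sqrt h1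
        _ = 8*sδ := Real.sqrt_sq (by positivity)
    have h3 : (0:ℝ) ≤ M/48 * r^3 := by positivity
    have h4 : δ * r ≤ 8/sM * (δ * sδ) := by
      rw [div_mul_eq_mul_div, le_div_iff₀ hsM]
      nlinarith [mul_le_mul_of_nonneg_left key hδ]
    linarith

private lemma aux_ineq2 (M r δ η : ℝ) (hM : 0 < M) (hr : 0 ≤ r) (hδ : 0 ≤ δ)
    (hrη : r ≤ η) :
    δ * r^2 / 2 ≤ M/48 * r^3 + 4 * (η * Real.sqrt η) / Real.sqrt M * (δ * Real.sqrt δ) := by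
  have hη : 0 ≤ η := hr.trans hrη
  set sM := Real.sqrt M with hsMdef
  set sδ := Real.sqrt δ with hsδdef
  set sη := Real.sqrt η with hsηdef
  set sr := Real.sqrt r with hsrdef
  have hsM : 0 < sM := Real.sqrt_pos.2 hM
  have hsM2 : sM^2 = M := Real.sq_sqrt hM.le
  have hsδ : 0 ≤ sδ := Real.sqrt_nonneg δ
  have hsδ2 : sδ^2 = δ := Real.sq_sqrt hδ
  have hsη : 0 ≤ sη := Real.sqrt_nonneg η
  have hsη2 : sη^2 = η := Real.sq_sqrt hη
  have hsr : 0 ≤ sr := Real.sqrt_nonneg r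
  have hsr2 : sr^2 = r := Real.sq_sqrt hr
  rcases le_or_gt (24 * δ) (M * r) with h | h
  · have h1 : δ * r^2 / 2 ≤ M/48 * r^3 := by
      nlinarith [mul_le_mul_of_nonneg_right h (sq_nonneg r)]
    have h2 : (0:ℝ) ≤ 4 * (η * sη) / sM * (δ * sδ) := by positivity
    linarith
  · have h1 : (sr*sM)^2 ≤ (5*sδ)^2 := by
      have e1 : (sr*sM)^2 = M * r := by rw [mul_pow, hsM2, hsr2]; ring
      have e2 : (5*sδ)^2 = 25 * δ := by rw [mul_pow, hsδ2]; ring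
      rw [e1, e2]; linarith
    have key1 : sr * sM ≤ 5 * sδ := by
      calc sr*sM = Real.sqrt ((sr*sM)^2) := (Real.sqrt_sq (by positivity)).symm
        _ ≤ Real.sqrt ((5*sδ)^2) := Real.sqrt_le_sqrt h1
        _ = 5*sδ := Real.sqrt_sq (by positivity)
    have key2 : sr^3 ≤ sη^3 := pow_le_pow_left₀ hsr (Real.sqrt_le_sqrt hrη) 3
    have c1 : r^2 * sM ≤ 5 * (sη^3 * sδ) := by
      have e : r^2 * sM = sr^3 * (sr * sM) := by rw [← hsr2]; ring
      have m1 : sr^3 * (sr*sM) ≤ sη^3 * (5*sδ) :=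
        mul_le_mul key2 key1 (by positivity) (by positivity)
      rw [e]; nlinarith [m1]
    have eη : η * sη = sη^3 := by rw [← hsη2]; ring
    have c2 : δ * r^2 / 2 * sM ≤ δ/2 * (5 * (sη^3 * sδ)) := by
      nlinarith [mul_le_mul_of_nonneg_left c1 (show (0:ℝ) ≤ δ/2 by linarith)]
    have c3 : δ/2 * (5*(sη^3*sδ)) ≤ 4 * sη^3 * (δ * sδ) := by
      nlinarith [mul_nonneg (mul_nonneg (pow_nonneg hsη 3) hsδ) hδ]
    have h4 : δ * r^2 / 2 ≤ 4 * (η * sη) / sM * (δ * sδ) := by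
      rw [div_mul_eq_mul_div, le_div_iff₀ hsM, eη]
      linarith
    have h3 : (0:ℝ) ≤ M/48 * r^3 := by positivity
    linarith

/-- Descent lemma for the cubic-regularized trust-region step:
if `y` minimizes the cubic model `m_x` over the closed ball of radius `η` around `x`,
`M ≥ 4L₂`, then
`F x - F y ≥ (M/12)‖y-x‖³ - (8/√M)‖∇F(x)-g‖^{3/2} - (4η^{3/2}/√M)‖∇²F(x)-H‖_op^{3/2}`. -/
theorem stmt_1 {d : ℕ} (F : EuclideanSpace ℝ (Fin d) → ℝ)
    (gradF : EuclideanSpace ℝ (Fin d) → EuclideanSpace ℝ (Fin d))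
    (hessF : EuclideanSpace ℝ (Fin d) →
      EuclideanSpace ℝ (Fin d) →L[ℝ] EuclideanSpace ℝ (Fin d))
    (L₂ : ℝ) (hL₂ : 0 < L₂)
    (hgrad : ∀ z, HasGradientAt F (gradF z) z)
    (hhess : ∀ z, HasFDerivAt gradF (hessF z) z)
    (hlip : ∀ z w, ‖hessF z - hessF w‖ ≤ L₂ * ‖z - w‖)
    (x g : EuclideanSpace ℝ (Fin d))
    (H : EuclideanSpace ℝ (Fin d) →L[ℝ] EuclideanSpace ℝ (Fin d))
    (hHsymm : ∀ v w, ⟪H v, w⟫ = ⟪v, H w⟫)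
    (M η : ℝ) (hM : M ≥ 4 * L₂) (hη : 0 ≤ η)
    (y : EuclideanSpace ℝ (Fin d))
    (hy_mem : y ∈ Metric.closedBall x η)
    (hy_min : IsMinOn
      (fun z => F x + ⟪g, z - x⟫ + (1 / 2) * ⟪z - x, H (z - x)⟫ + M / 6 * ‖z - x‖ ^ 3)
      (Metric.closedBall x η) y) :
    F x - F y ≥ M / 12 * ‖y - x‖ ^ 3
      - 8 / Real.sqrt M * ‖gradF x - g‖ ^ ((3 : ℝ) / 2)
      - 4 * η ^ ((3 : ℝ) / 2) / Real.sqrt M * ‖hessF x - H‖ ^ ((3 : ℝ) / 2) := by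
  have hM0 : (0:ℝ) < M := lt_of_lt_of_le (by linarith) hM
  have hT := aux_taylor F gradF hessF L₂ hgrad hhess hlip x y
  have hA : F x + ⟪g, y - x⟫ + (1/2) * ⟪y - x, H (y - x)⟫ + M/6 * ‖y - x‖^3 ≤ F x := by
    have h := isMinOn_iff.mp hy_min x (Metric.mem_closedBall_self hη)
    simp only [sub_self, inner_zero_right, inner_zero_left, norm_zero, map_zero,
      mul_zero, add_zero] at h
    have h0 : M / 6 * (0:ℝ)^3 = 0 := by norm_num
    linarith [h]
  set s := y - x with hs
  set r := ‖s‖ with hrdef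
  have hr0 : (0:ℝ) ≤ r := norm_nonneg _
  have hrη : r ≤ η := by
    have := Metric.mem_closedBall.mp hy_mem
    rwa [dist_eq_norm] at this
  -- Cauchy-Schwarz bounds
  have hCS1 : ⟪gradF x - g, s⟫ ≤ ‖gradF x - g‖ * r := real_inner_le_norm _ _
  have hCS2 : ⟪(hessF x - H) s, s⟫ ≤ ‖hessF x - H‖ * r^2 := by
    have h1 := real_inner_le_norm ((hessF x - H) s) s
    have h2 := (hessF x - H).le_opNorm s
    nlinarith [norm_nonneg s, mul_le_mul_of_nonneg_right h2 (norm_nonneg s)]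
  have hsplit1 : ⟪gradF x, s⟫ = ⟪g, s⟫ + ⟪gradF x - g, s⟫ := by
    rw [inner_sub_left]; ring
  have hsplit2 : ⟪hessF x s, s⟫ = ⟪H s, s⟫ + ⟪(hessF x - H) s, s⟫ := by
    rw [ContinuousLinearMap.sub_apply, inner_sub_left]; ring
  have hsym : ⟪s, H s⟫ = ⟪H s, s⟫ := real_inner_comm _ _
  have key : F x - F y ≥ M/6 * r^3 - ‖gradF x - g‖ * r
      - ‖hessF x - H‖ * r^2 / 2 - L₂/6 * r^3 := by
    rw [hsym] at hA
    linarith [hT, hA, hCS1, hCS2]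
  rw [aux_rpow32 (norm_nonneg (gradF x - g)), aux_rpow32 (norm_nonneg (hessF x - H)),
    aux_rpow32 hη]
  have i1 := aux_ineq1 M r ‖gradF x - g‖ hM0 hr0 (norm_nonneg _)
  have i2 := aux_ineq2 M r ‖hessF x - H‖ η hM0 hr0 (norm_nonneg _) hrη
  have hL : L₂/6 * r^3 ≤ M/24 * r^3 := by
    nlinarith [pow_nonneg hr0 3]
  linarith
end

section
/- Let F : ℝ^d → ℝ be twice differentiable with L₂-Lipschitz Hessian. Fix x, g ∈ ℝ^d, a symmetric matrix H ∈ ℝ^{d×d}, M ≥ 4L₂ and η > 0. Define m_x(y) := F(x) + ⟨g, y − x⟩ + (1/2)⟨y − x, H(y − x)⟩ + (M/6)‖y − x‖³, and let y be a minimizer of m_x over the closed Euclidean ball of radius η centered at x. If ‖∇F(y)‖ ≥ Mη²/2, then 1 ≤ (2/η²)·‖y − x‖² + (2/(Mη²))·(‖∇F(x) − g‖ + η·‖∇²F(x) − H‖_op). -/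
open scoped RealInnerProductSpace

private lemma aux_expand (M η a b r : ℝ) (hM : M ≠ 0) (hη : η ≠ 0) :
    (2 / η ^ 2 * r + 2 / (M * η ^ 2) * (a + η * b)) * (M * η ^ 2)
      = 2 * M * r + 2 * (a + η * b) := by
  field_simp

/-- If `y` minimizes the cubic-regularized trust-region model over the
closed ball of radius `η > 0` around `x` with `M ≥ 4L₂`, and `‖∇F(y)‖ ≥ Mη²/2`, then
`1 ≤ (2/η²)‖y-x‖² + (2/(Mη²))(‖∇F(x)-g‖ + η‖∇²F(x)-H‖_op)`. -/
theorem stmt_2 {d : ℕ} (F : EuclideanSpace ℝ (Fin d) → ℝ)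
    (gradF : EuclideanSpace ℝ (Fin d) → EuclideanSpace ℝ (Fin d))
    (hessF : EuclideanSpace ℝ (Fin d) →
      EuclideanSpace ℝ (Fin d) →L[ℝ] EuclideanSpace ℝ (Fin d))
    (L₂ : ℝ) (hL₂ : 0 < L₂)
    (hgrad : ∀ z, HasGradientAt F (gradF z) z)
    (hhess : ∀ z, HasFDerivAt gradF (hessF z) z)
    (hlip : ∀ z w, ‖hessF z - hessF w‖ ≤ L₂ * ‖z - w‖)
    (x g : EuclideanSpace ℝ (Fin d))
    (H : EuclideanSpace ℝ (Fin d) →L[ℝ] EuclideanSpace ℝ (Fin d))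
    (hHsymm : ∀ v w, ⟪H v, w⟫ = ⟪v, H w⟫)
    (M η : ℝ) (hM : M ≥ 4 * L₂) (hη : 0 < η)
    (y : EuclideanSpace ℝ (Fin d))
    (hy_mem : y ∈ Metric.closedBall x η)
    (hy_min : IsMinOn
      (fun z => F x + ⟪g, z - x⟫ + (1 / 2) * ⟪z - x, H (z - x)⟫ + M / 6 * ‖z - x‖ ^ 3)
      (Metric.closedBall x η) y)
    (hgrad_y : ‖gradF y‖ ≥ M * η ^ 2 / 2) :
    1 ≤ 2 / η ^ 2 * ‖y - x‖ ^ 2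
      + 2 / (M * η ^ 2) * (‖gradF x - g‖ + η * ‖hessF x - H‖) := by
  have hM0 : (0:ℝ) < M := lt_of_lt_of_le (by linarith) hM
  have hE1 : (0:ℝ) ≤ ‖gradF x - g‖ := norm_nonneg _
  have hE2 : (0:ℝ) ≤ ‖hessF x - H‖ := norm_nonneg _
  have hr0 : (0:ℝ) ≤ ‖y - x‖ := norm_nonneg _
  have hrη : ‖y - x‖ ≤ η := by
    have := Metric.mem_closedBall.mp hy_mem
    rwa [dist_eq_norm] at this
  by_cases hcase : η ^ 2 ≤ 2 * ‖y - x‖ ^ 2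
  · have h1 : (1:ℝ) ≤ 2 / η ^ 2 * ‖y - x‖ ^ 2 := by
      rw [div_mul_eq_mul_div, le_div_iff₀ (by positivity)]
      nlinarith
    have h2 : (0:ℝ) ≤ 2 / (M * η ^ 2) * (‖gradF x - g‖ + η * ‖hessF x - H‖) := by
      positivity
    linarith
  · push_neg at hcase
    have hylt : ‖y - x‖ < η := by nlinarith
    -- y is a local minimum of the model
    have hnhds : Metric.closedBall x η ∈ nhds y := by
      refine Filter.mem_of_superset (Metric.isOpen_ball.mem_nhds ?_)
        Metric.ball_subset_closedBall
      rw [Metric.mem_ball, dist_eq_norm]; exact hylt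
    have hloc : IsLocalMin
        (fun z => F x + ⟪g, z - x⟫ + (1 / 2) * ⟪z - x, H (z - x)⟫ + M / 6 * ‖z - x‖ ^ 3)
        y := hy_min.isLocalMin hnhds
    -- derivative of the model at y
    have hsub : HasFDerivAt (fun z : EuclideanSpace ℝ (Fin d) => z - x)
        (ContinuousLinearMap.id ℝ _) y := (hasFDerivAt_id y).sub_const x
    have h1 : HasFDerivAt (fun z : EuclideanSpace ℝ (Fin d) => ⟪g, z - x⟫) (innerSL ℝ g) y := by
      have := ((innerSL ℝ g).hasFDerivAt (x := y - x)).comp y hsub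
      exact this
    have hH : HasFDerivAt (fun z : EuclideanSpace ℝ (Fin d) => H (z - x)) H y := by
      exact (H.hasFDerivAt (x := y - x)).comp y hsub
    have h2 := (hsub.inner ℝ hH).const_mul (1/2 : ℝ)
    have h3' : HasFDerivAt (fun u : EuclideanSpace ℝ (Fin d) => ‖u‖ ^ (3:ℝ))
        ((3 * ‖y - x‖ ^ ((3:ℝ) - 2)) • innerSL ℝ (y - x)) (y - x) :=
      hasFDerivAt_norm_rpow (y - x) (by norm_num)
    have h3 : HasFDerivAt (fun z : EuclideanSpace ℝ (Fin d) => ‖z - x‖ ^ 3)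
        ((3 * ‖y - x‖ ^ ((3:ℝ) - 2)) • innerSL ℝ (y - x)) y := by
      have := h3'.comp y hsub
      simp only [ContinuousLinearMap.comp_id] at this
      have hfun : (fun z : EuclideanSpace ℝ (Fin d) => ‖z - x‖ ^ 3)
          = ((fun u : EuclideanSpace ℝ (Fin d) => ‖u‖ ^ (3:ℝ)) ∘ fun z => z - x) := by
        funext z
        simp only [Function.comp_apply]
        rw [← Real.rpow_natCast ‖z - x‖ 3]
        norm_num
      rw [hfun]; exact this
    have hm : HasFDerivAt
        (fun z => F x + ⟪g, z - x⟫ + (1 / 2) * ⟪z - x, H (z - x)⟫ + M / 6 * ‖z - x‖ ^ 3)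
        (((0 : EuclideanSpace ℝ (Fin d) →L[ℝ] ℝ) + innerSL ℝ g
          + (1/2 : ℝ) • ((fderivInnerCLM ℝ (y - x, H (y - x))).comp
              ((ContinuousLinearMap.id ℝ _).prod H))
          + (M/6 : ℝ) • ((3 * ‖y - x‖ ^ ((3:ℝ) - 2)) • innerSL ℝ (y - x)))) y :=
      (((hasFDerivAt_const (F x) y).add h1).add h2).add (h3.const_mul (M/6))
    have hD0 := hloc.hasFDerivAt_eq_zero hm
    -- stationarity as a vector equation
    have key : ∀ v : EuclideanSpace ℝ (Fin d),
        ⟪g + H (y - x) + (M / 2 * ‖y - x‖) • (y - x), v⟫ = 0 := by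
      intro v
      have hv : ((0 : EuclideanSpace ℝ (Fin d) →L[ℝ] ℝ) + innerSL ℝ g
          + (1/2 : ℝ) • ((fderivInnerCLM ℝ (y - x, H (y - x))).comp
              ((ContinuousLinearMap.id ℝ _).prod H))
          + (M/6 : ℝ) • ((3 * ‖y - x‖ ^ ((3:ℝ) - 2)) • innerSL ℝ (y - x))) v = 0 := by
        rw [hD0]; rfl
      have hpow : ‖y - x‖ ^ ((3:ℝ) - 2) = ‖y - x‖ := by
        norm_num
      simp only [ContinuousLinearMap.add_apply, ContinuousLinearMap.zero_apply,
        ContinuousLinearMap.smul_apply, ContinuousLinearMap.comp_apply,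
        ContinuousLinearMap.prod_apply, ContinuousLinearMap.id_apply,
        fderivInnerCLM_apply, innerSL_apply_apply, smul_eq_mul, hpow] at hv
      have hsym : ⟪v, H (y - x)⟫ = ⟪H (y - x), v⟫ := real_inner_comm _ _
      rw [inner_add_left, inner_add_left, real_inner_smul_left]
      rw [hsym, ← hHsymm (y - x) v] at hv
      have hring : M / 6 * (3 * ‖y - x‖ * ⟪y - x, v⟫)
          = M / 2 * ‖y - x‖ * ⟪y - x, v⟫ := by ring
      rw [hring] at hv
      linarith
    have hw : g + H (y - x) + (M / 2 * ‖y - x‖) • (y - x) = 0 := by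
      have := key (g + H (y - x) + (M / 2 * ‖y - x‖) • (y - x))
      exact inner_self_eq_zero.mp this
    clear hm hD0 hloc hnhds hy_min hsub h1 hH h2 h3 h3' key hgrad
    have hgH : ‖g + H (y - x)‖ = M / 2 * ‖y - x‖ ^ 2 := by
      have : g + H (y - x) = -((M / 2 * ‖y - x‖) • (y - x)) := by
        rw [eq_neg_iff_add_eq_zero]; exact hw
      rw [this, norm_neg, norm_smul, Real.norm_eq_abs, abs_of_nonneg (by positivity)]
      ring
    -- Taylor bound on the gradient
    have htay : ‖gradF y - gradF x - (hessF x) (y - x)‖ ≤ (L₂ * ‖y - x‖) * ‖y - x‖ := by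
      refine (convex_segment x y).norm_image_sub_le_of_norm_hasFDerivWithin_le'
        (fun z _ => (hhess z).hasFDerivWithinAt) (fun z hz => ?_)
        (left_mem_segment ℝ x y) (right_mem_segment ℝ x y)
      have hzx : ‖z - x‖ ≤ ‖y - x‖ := by
        rw [segment_eq_image'] at hz
        obtain ⟨t, ht, rfl⟩ := hz
        simp only [add_sub_cancel_left, norm_smul, Real.norm_eq_abs,
          abs_of_nonneg ht.1]
        nlinarith [norm_nonneg (y - x), ht.2]
      calc ‖hessF z - hessF x‖ ≤ L₂ * ‖z - x‖ := hlip z x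
        _ ≤ L₂ * ‖y - x‖ := mul_le_mul_of_nonneg_left hzx hL₂.le
    -- assemble the gradient bound
    have hdecomp : gradF y = (gradF y - gradF x - (hessF x) (y - x))
        + ((hessF x - H) (y - x)) + (gradF x - g) + (g + H (y - x)) := by
      simp only [ContinuousLinearMap.sub_apply]
      abel
    have hop : ‖(hessF x - H) (y - x)‖ ≤ ‖hessF x - H‖ * ‖y - x‖ :=
      ContinuousLinearMap.le_opNorm _ _
    have hnorm : ‖gradF y‖ ≤ L₂ * ‖y - x‖ ^ 2 + ‖hessF x - H‖ * ‖y - x‖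
        + ‖gradF x - g‖ + M / 2 * ‖y - x‖ ^ 2 := by
      have tri : ∀ a b c e : EuclideanSpace ℝ (Fin d),
          ‖a + b + c + e‖ ≤ ‖a‖ + ‖b‖ + ‖c‖ + ‖e‖ := by
        intro a b c e
        calc ‖a + b + c + e‖ ≤ ‖a + b + c‖ + ‖e‖ := norm_add_le _ _
          _ ≤ ‖a + b‖ + ‖c‖ + ‖e‖ := by
              have := norm_add_le (a + b) c; linarith
          _ ≤ ‖a‖ + ‖b‖ + ‖c‖ + ‖e‖ := by
              have := norm_add_le a b; linarith
      have hstep := tri (gradF y - gradF x - (hessF x) (y - x)) ((hessF x - H) (y - x))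
        (gradF x - g) (g + H (y - x))
      rw [← hdecomp] at hstep
      rw [hgH] at hstep
      have hth : ‖gradF y - gradF x - (hessF x) (y - x)‖ ≤ L₂ * ‖y - x‖ ^ 2 := by
        have : (L₂ * ‖y - x‖) * ‖y - x‖ = L₂ * ‖y - x‖ ^ 2 := by ring
        linarith [htay]
      linarith [hth, hop, hstep]
    -- final algebra
    have hE2r : ‖hessF x - H‖ * ‖y - x‖ ≤ ‖hessF x - H‖ * η :=
      mul_le_mul_of_nonneg_left hrη hE2
    have hL : L₂ * ‖y - x‖ ^ 2 ≤ M / 4 * ‖y - x‖ ^ 2 :=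
      mul_le_mul_of_nonneg_right (by linarith) (by positivity)
    have key2 : M * η ^ 2 ≤ (3 * M / 2) * ‖y - x‖ ^ 2
        + 2 * (‖gradF x - g‖ + η * ‖hessF x - H‖) := by linarith
    have hMη : (0:ℝ) < M * η ^ 2 := by positivity
    rw [← mul_le_mul_iff_left₀ hMη, one_mul]
    rw [aux_expand M η ‖gradF x - g‖ ‖hessF x - H‖ (‖y - x‖ ^ 2) hM0.ne' hη.ne']
    have hMr : 0 ≤ M * ‖y - x‖ ^ 2 := mul_nonneg hM0.le (sq_nonneg _)
    linarith only [key2, hMr]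
end

section
/- Let F : ℝ^d → ℝ be twice differentiable with L₂-Lipschitz Hessian, fix x ∈ ℝ^d, M ≥ 4L₂ and η > 0, and let (Ω, 𝔽, P) be a probability space. Let g : Ω → ℝ^d and H : Ω → S^d (symmetric d×d matrices) be random variables with E‖∇F(x) − g‖² < ∞ and E‖∇²F(x) − H‖_op² < ∞, and let y : Ω → ℝ^d be a measurable map such that for every ω, y(ω) minimizes z ↦ F(x) + ⟨g(ω), z − x⟩ + (1/2)⟨z − x, H(ω)(z − x)⟩ + (M/6)‖z − x‖³ over the closed ball of radius η around x; assume F∘y is integrable. Then E[F(x) − F(y)] ≥ (Mη³/60)·P(‖∇F(y)‖ ≥ Mη²/2) − (9/√M)·(E‖∇F(x) − g‖²)^{3/4} − (5η^{3/2}/√M)·(E‖∇²F(x) − H‖_op²)^{3/4}. -/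
open MeasureTheory
open scoped RealInnerProductSpace
open scoped ENNReal

theorem lemA (s u v : ℝ) (hs0 : 0 ≤ s) (hs1 : s ≤ 1) (hu : 0 ≤ u) (hv : 0 ≤ v) :
    s^3/24 + 9*u^3 + 5*v^3 - u^2*s - v^2*s^2/2 ≥ 0 := by
  have h1 : s^3 ≤ 1 := pow_le_one₀ hs0 hs1
  nlinarith [mul_nonneg (sq_nonneg (4*u-s)) (by linarith : (0:ℝ) ≤ 8*u+s),
    mul_nonneg (sq_nonneg (3*v-s^2)) (by positivity : (0:ℝ) ≤ 6*v+s^2),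
    mul_nonneg (mul_nonneg (mul_nonneg hs0 hs0) hs0) (by linarith : (0:ℝ) ≤ 1 - s^3)]

theorem lemA' (M η s ug uH : ℝ) (hM : 0 < M) (hη : 0 < η) (hs0 : 0 ≤ s) (hs1 : s ≤ η)
    (hug : 0 ≤ ug) (huH : 0 ≤ uH) :
    M*s^3/24 + 9*ug^3/Real.sqrt M + 5*(Real.sqrt η)^3*uH^3/Real.sqrt M
      - ug^2*s - uH^2*s^2/2 ≥ 0 := by
  set sM := Real.sqrt M with hsM
  set sη := Real.sqrt η with hsη
  have hsM0 : 0 < sM := Real.sqrt_pos.2 hM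
  have hsη0 : 0 < sη := Real.sqrt_pos.2 hη
  have hM2 : M = sM^2 := (Real.sq_sqrt hM.le).symm
  have hη2 : η = sη^2 := (Real.sq_sqrt hη.le).symm
  have key := lemA (s/η) (ug/(sM*η)) (uH/(sM*sη)) (by positivity)
    ((div_le_one hη).2 hs1) (by positivity) (by positivity)
  have hmul := mul_le_mul_of_nonneg_left key (by positivity : (0:ℝ) ≤ M*η^3)
  rw [mul_zero] at hmul
  have heq : M*η^3 * ((s/η)^3/24 + 9*(ug/(sM*η))^3 + 5*(uH/(sM*sη))^3
      - (ug/(sM*η))^2*(s/η) - (uH/(sM*sη))^2*(s/η)^2/2)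
      = M*s^3/24 + 9*ug^3/sM + 5*sη^3*uH^3/sM - ug^2*s - uH^2*s^2/2 := by
    rw [hM2, hη2]
    field_simp
  rw [heq] at hmul
  linarith

theorem lemB (s u v : ℝ) (hs0 : 0 ≤ s) (hs1 : s ≤ 1) (hu : 0 ≤ u) (hv : 0 ≤ v)
    (hc : u^2 + v^2*s + (3/4)*s^2 ≥ 1/2) :
    s^3/24 + 9*u^3 + 5*v^3 - u^2*s - v^2*s^2/2 ≥ 1/60 := by
  have h6 : s^6 ≤ s^3 := by
    have h1 : s^3 ≤ 1 := pow_le_one₀ hs0 hs1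
    nlinarith [pow_nonneg hs0 3]
  have certu : u^2*s ≤ 9*u^3 + (4/2187)*s^3 := by
    nlinarith [mul_nonneg (sq_nonneg (27*u-2*s)) (by linarith : (0:ℝ) ≤ 27*u+s)]
  have certv : v^2*s^2/2 ≤ 5*v^3 + s^6/1350 := by
    nlinarith [mul_nonneg (sq_nonneg (15*v-s^2)) (by positivity : (0:ℝ) ≤ 30*v+s^2)]
  rcases le_or_gt (19/25) s with hs | hs
  · have hs3 : (6859:ℝ)/15625 ≤ s^3 := by nlinarith
    linarith
  · have hc' : u^2 + v^2*s ≥ 167/2500 := by nlinarith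
    have hs36 : s^3 ≤ 1 := pow_le_one₀ hs0 hs1
    rcases le_or_gt (167/5000 : ℝ) (u^2) with h | h
    · have hu' : (9:ℝ)/50 ≤ u := by nlinarith
      nlinarith [mul_nonneg (sq_nonneg u) (by linarith : (0:ℝ) ≤ u - 9/50),
        mul_nonneg (sq_nonneg u) (by linarith : (0:ℝ) ≤ 19/25 - s),
        pow_nonneg hs0 3]
    · have hv2 : v^2 ≥ 835/19000 := by nlinarith [mul_nonneg (mul_nonneg hv hv) hs0]
      have hv' : (1:ℝ)/5 ≤ v := by nlinarith
      nlinarith [mul_nonneg (sq_nonneg v) (by linarith : (0:ℝ) ≤ v - 1/5),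
        mul_nonneg (sq_nonneg v) (by nlinarith : (0:ℝ) ≤ 361/625 - s^2),
        pow_nonneg hs0 3]

theorem lemB' (M η s ug uH : ℝ) (hM : 0 < M) (hη : 0 < η) (hs0 : 0 ≤ s) (hs1 : s ≤ η)
    (hug : 0 ≤ ug) (huH : 0 ≤ uH)
    (hc : ug^2 + uH^2*s + (3/4)*M*s^2 ≥ M*η^2/2) :
    M*s^3/24 + 9*ug^3/Real.sqrt M + 5*(Real.sqrt η)^3*uH^3/Real.sqrt M
      - ug^2*s - uH^2*s^2/2 ≥ M*η^3/60 := by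
  set sM := Real.sqrt M with hsM
  set sη := Real.sqrt η with hsη
  have hsM0 : 0 < sM := Real.sqrt_pos.2 hM
  have hsη0 : 0 < sη := Real.sqrt_pos.2 hη
  have hM2 : M = sM^2 := (Real.sq_sqrt hM.le).symm
  have hη2 : η = sη^2 := (Real.sq_sqrt hη.le).symm
  have hcon : (ug/(sM*η))^2 + (uH/(sM*sη))^2*(s/η) + (3/4)*(s/η)^2 ≥ 1/2 := by
    have hd : (ug/(sM*η))^2 + (uH/(sM*sη))^2*(s/η) + (3/4)*(s/η)^2 - 1/2
        = (ug^2 + uH^2*s + (3/4)*M*s^2 - M*η^2/2)/(M*η^2) := by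
      rw [hM2, hη2]; field_simp
    have : (0:ℝ) ≤ (ug^2 + uH^2*s + (3/4)*M*s^2 - M*η^2/2)/(M*η^2) :=
      div_nonneg (by linarith) (by positivity)
    linarith [hd ▸ this]
  have key := lemB (s/η) (ug/(sM*η)) (uH/(sM*sη)) (by positivity)
    ((div_le_one hη).2 hs1) (by positivity) (by positivity) hcon
  have hmul := mul_le_mul_of_nonneg_left key (by positivity : (0:ℝ) ≤ M*η^3)
  have heq : M*η^3 * ((s/η)^3/24 + 9*(ug/(sM*η))^3 + 5*(uH/(sM*sη))^3
      - (ug/(sM*η))^2*(s/η) - (uH/(sM*sη))^2*(s/η)^2/2)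
      = M*s^3/24 + 9*ug^3/sM + 5*sη^3*uH^3/sM - ug^2*s - uH^2*s^2/2 := by
    rw [hM2, hη2]
    field_simp
  rw [heq] at hmul
  calc M*η^3/60 = M*η^3 * (1/60) := by ring
    _ ≤ _ := hmul

open scoped RealInnerProductSpace
variable {d : ℕ}
local notation "E" => EuclideanSpace ℝ (Fin d)

theorem gradMVT (F : E → ℝ) (gradF : E → E) (hessF : E → E →L[ℝ] E)
    (L₂ : ℝ) (hhess : ∀ z, HasFDerivAt gradF (hessF z) z)
    (hlip : ∀ z w, ‖hessF z - hessF w‖ ≤ L₂ * ‖z - w‖) (hL₂ : 0 ≤ L₂)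
    (a b : E) : ‖gradF b - gradF a - hessF a (b - a)‖ ≤ L₂ * ‖b - a‖ ^ 2 := by
  set s : Set E := segment ℝ a b with hs
  have hseg : s ⊆ Metric.closedBall a ‖b - a‖ := by
    apply (convex_closedBall a ‖b - a‖).segment_subset
    · simp
    · simp [Metric.mem_closedBall, dist_eq_norm]
  have key : ‖(gradF b - hessF a b) - (gradF a - hessF a a)‖ ≤ (L₂ * ‖b - a‖) * ‖b - a‖ := by
    apply Convex.norm_image_sub_le_of_norm_hasFDerivWithin_le
      (f' := fun z => hessF z - hessF a)
      (fun z _ => ((hhess z).sub (hessF a).hasFDerivAt).hasFDerivWithinAt)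
      (fun z hz => ?_) (convex_segment a b)
      (left_mem_segment ℝ a b) (right_mem_segment ℝ a b)
    calc ‖hessF z - hessF a‖ ≤ L₂ * ‖z - a‖ := hlip z a
      _ ≤ L₂ * ‖b - a‖ := by
          have := hseg hz
          simp only [Metric.mem_closedBall, dist_eq_norm] at this
          exact mul_le_mul_of_nonneg_left this hL₂
  have : (gradF b - hessF a b) - (gradF a - hessF a a) = gradF b - gradF a - hessF a (b - a) := by
    rw [map_sub]; abel
  rw [this] at key
  calc ‖gradF b - gradF a - hessF a (b - a)‖ ≤ L₂ * ‖b - a‖ * ‖b - a‖ := key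
    _ = L₂ * ‖b - a‖ ^ 2 := by ring

theorem taylor2 (F : E → ℝ) (gradF : E → E) (hessF : E → E →L[ℝ] E)
    (L₂ : ℝ) (hgrad : ∀ z, HasGradientAt F (gradF z) z)
    (hhess : ∀ z, HasFDerivAt gradF (hessF z) z)
    (hlip : ∀ z w, ‖hessF z - hessF w‖ ≤ L₂ * ‖z - w‖) (hL₂ : 0 ≤ L₂)
    (a w : E) : F (a + w) ≤ F a + ⟪gradF a, w⟫ + 1/2 * ⟪w, hessF a w⟫ + L₂/3 * ‖w‖ ^ 3 := by
  set ψ : ℝ → ℝ := fun t => F (a + t • w) - t * ⟪gradF a, w⟫ - t^2/2 * ⟪w, hessF a w⟫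
      - t^3 * (L₂/3) * ‖w‖^3 with hψ
  have hd : ∀ t : ℝ, HasDerivAt ψ
      (⟪gradF (a + t • w), w⟫ - ⟪gradF a, w⟫ - t * ⟪w, hessF a w⟫ - t^2 * L₂ * ‖w‖^3) t := by
    intro t
    have hline : HasDerivAt (fun t : ℝ => a + t • w) w t := by
      simpa using ((hasDerivAt_id t).smul_const w).const_add a
    have hF : HasDerivAt (fun t : ℝ => F (a + t • w)) ⟪gradF (a + t • w), w⟫ t := by
      have := ((hgrad (a + t • w)).hasFDerivAt.comp_hasDerivAt t hline)
      simpa [Function.comp_def] using this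
    have h2 : HasDerivAt (fun t : ℝ => t * ⟪gradF a, w⟫) ⟪gradF a, w⟫ t := by
      simpa using (hasDerivAt_id t).mul_const ⟪gradF a, w⟫
    have h3 : HasDerivAt (fun t : ℝ => t^2/2 * ⟪w, hessF a w⟫) (t * ⟪w, hessF a w⟫) t := by
      have := ((hasDerivAt_pow 2 t).div_const 2).mul_const ⟪w, hessF a w⟫
      exact this.congr_deriv (by ring)
    have h4 : HasDerivAt (fun t : ℝ => t^3 * (L₂/3) * ‖w‖^3) (t^2 * L₂ * ‖w‖^3) t := by
      have := ((hasDerivAt_pow 3 t).mul_const (L₂/3)).mul_const (‖w‖^3)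
      exact this.congr_deriv (by ring)
    exact ((hF.sub h2).sub h3).sub h4
  have hmono : AntitoneOn ψ (Set.Icc 0 1) := by
    apply antitoneOn_of_deriv_nonpos (convex_Icc 0 1)
    · exact fun t _ => (hd t).continuousAt.continuousWithinAt
    · exact fun t _ => (hd t).differentiableAt.differentiableWithinAt
    · intro t ht
      rw [interior_Icc] at ht
      rw [(hd t).deriv]
      have hb : ‖gradF (a + t • w) - gradF a - hessF a (t • w)‖ ≤ L₂ * ‖t • w‖^2 := by
        have := gradMVT F gradF hessF L₂ hhess hlip hL₂ a (a + t • w)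
        simpa using this
      have hiq : ⟪gradF (a + t • w) - gradF a - hessF a (t • w), w⟫ ≤ L₂ * t^2 * ‖w‖^3 := by
        calc ⟪gradF (a + t • w) - gradF a - hessF a (t • w), w⟫
            ≤ ‖gradF (a + t • w) - gradF a - hessF a (t • w)‖ * ‖w‖ := real_inner_le_norm _ _
          _ ≤ L₂ * ‖t • w‖^2 * ‖w‖ := by
              exact mul_le_mul_of_nonneg_right hb (norm_nonneg w)
          _ = L₂ * t^2 * ‖w‖^3 := by rw [norm_smul, Real.norm_eq_abs, mul_pow, sq_abs]; ring
      have hexp : ⟪gradF (a + t • w) - gradF a - hessF a (t • w), w⟫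
          = ⟪gradF (a + t • w), w⟫ - ⟪gradF a, w⟫ - t * ⟪w, hessF a w⟫ := by
        rw [inner_sub_left, inner_sub_left, _root_.map_smul, inner_smul_left]
        simp [real_inner_comm w]
      rw [hexp] at hiq
      linarith
  have h01 := hmono (Set.mem_Icc.2 ⟨le_refl 0, zero_le_one⟩) (Set.mem_Icc.2 ⟨zero_le_one, le_refl 1⟩) zero_le_one
  simp only [hψ, zero_smul, add_zero, one_smul] at h01
  push_cast at h01
  nlinarith [h01]

theorem cube_fderiv (c y : E) :
    HasFDerivAt (fun z => ‖z - c‖^3) ((3 * ‖y - c‖) • (innerSL ℝ (y - c))) y := by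
  have hsub : HasFDerivAt (fun z : E => z - c) (ContinuousLinearMap.id ℝ E) y :=
    (hasFDerivAt_id y).sub_const c
  have hinner : HasFDerivAt (fun z : E => (⟪z - c, z - c⟫ : ℝ))
      ((fderivInnerCLM ℝ (y - c, y - c)).comp
        ((ContinuousLinearMap.id ℝ E).prod (ContinuousLinearMap.id ℝ E))) y :=
    hsub.inner ℝ hsub
  have hrpow : HasDerivAt (fun t : ℝ => t ^ ((3:ℝ)/2))
      ((3:ℝ)/2 * (⟪y - c, y - c⟫ : ℝ) ^ ((1:ℝ)/2)) (⟪y - c, y - c⟫ : ℝ) := by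
    have := Real.hasDerivAt_rpow_const (x := (⟪y - c, y - c⟫ : ℝ)) (p := (3:ℝ)/2)
      (Or.inr (by norm_num))
    convert this using 2
    norm_num
  have hcomp := hrpow.comp_hasFDerivAt y hinner
  have hfun : (fun z : E => (⟪z - c, z - c⟫ : ℝ) ^ ((3:ℝ)/2)) = fun z => ‖z - c‖^3 := by
    funext z
    rw [real_inner_self_eq_norm_sq, ← Real.rpow_natCast ‖z - c‖ 2,
      ← Real.rpow_mul (norm_nonneg _), ← Real.rpow_natCast ‖z - c‖ 3]
    norm_num
  simp only [Function.comp_def] at hcomp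
  rw [hfun] at hcomp
  have hsc : ((⟪y - c, y - c⟫ : ℝ)) ^ ((1:ℝ)/2) = ‖y - c‖ := by
    rw [real_inner_self_eq_norm_sq, ← Real.rpow_natCast ‖y - c‖ 2,
      ← Real.rpow_mul (norm_nonneg _)]
    norm_num
  refine hcomp.congr_fderiv ?_
  ext w : 1
  rw [hsc]
  simp only [ContinuousLinearMap.smul_apply, innerSL_apply_apply, ContinuousLinearMap.coe_comp',
    Function.comp_apply, ContinuousLinearMap.prod_apply, ContinuousLinearMap.coe_id', id_eq,
    fderivInnerCLM_apply, smul_eq_mul]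
  rw [real_inner_comm w (y - c)]
  ring

theorem stationary (Fx : ℝ) (gω : E) (Hω : E →L[ℝ] E)
    (hHsymm : ∀ v w, ⟪Hω v, w⟫ = ⟪v, Hω w⟫)
    (M η : ℝ) (x yω : E) (hlt : ‖yω - x‖ < η)
    (hmin : IsMinOn
      (fun z => Fx + ⟪gω, z - x⟫ + (1 / 2) * ⟪z - x, Hω (z - x)⟫ + M / 6 * ‖z - x‖ ^ 3)
      (Metric.closedBall x η) yω) :
    gω + Hω (yω - x) + ((M/2) * ‖yω - x‖) • (yω - x) = 0 := by
  set v := yω - x with hv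
  have hsub : HasFDerivAt (fun z : E => z - x) (ContinuousLinearMap.id ℝ E) yω :=
    (hasFDerivAt_id yω).sub_const x
  have d1 : HasFDerivAt (fun z : E => (⟪gω, z - x⟫ : ℝ))
      ((fderivInnerCLM ℝ (gω, v)).comp ((0 : E →L[ℝ] E).prod (ContinuousLinearMap.id ℝ E))) yω :=
    (hasFDerivAt_const gω yω).inner ℝ hsub
  have dH : HasFDerivAt (fun z : E => Hω (z - x)) Hω yω := by
    have := Hω.hasFDerivAt.comp yω hsub
    simpa [Function.comp_def] using this
  have d2 : HasFDerivAt (fun z : E => (⟪z - x, Hω (z - x)⟫ : ℝ))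
      ((fderivInnerCLM ℝ (v, Hω v)).comp ((ContinuousLinearMap.id ℝ E).prod Hω)) yω :=
    hsub.inner ℝ dH
  have d3 := cube_fderiv x yω
  have dtot : HasFDerivAt
      (fun z => Fx + ⟪gω, z - x⟫ + (1 / 2) * ⟪z - x, Hω (z - x)⟫ + M / 6 * ‖z - x‖ ^ 3)
      (innerSL ℝ (gω + Hω v + ((M/2) * ‖v‖) • v)) yω := by
    have := (((d1.const_add Fx).add (d2.const_mul (1/2))).add (d3.const_mul (M/6)))
    refine this.congr_fderiv ?_
    ext w
    simp only [innerSL_apply_apply, ContinuousLinearMap.add_apply, ContinuousLinearMap.coe_smul',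
      Pi.smul_apply, ContinuousLinearMap.coe_comp', Function.comp_apply,
      ContinuousLinearMap.prod_apply, ContinuousLinearMap.coe_id', id_eq,
      ContinuousLinearMap.zero_apply, fderivInnerCLM_apply, ContinuousLinearMap.smul_apply,
      inner_add_left, inner_smul_left, smul_eq_mul, conj_trivial]
    rw [inner_zero_left]
    have h1 : (⟪w, Hω v⟫ : ℝ) = ⟪v, Hω w⟫ := by rw [← hHsymm v w, real_inner_comm]
    rw [← hv, h1, hHsymm v w]
    ring
  have hloc : IsLocalMin
      (fun z => Fx + ⟪gω, z - x⟫ + (1 / 2) * ⟪z - x, Hω (z - x)⟫ + M / 6 * ‖z - x‖ ^ 3) yω := by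
    apply hmin.isLocalMin
    exact Metric.closedBall_mem_nhds_of_mem (by simpa [dist_eq_norm] using hlt)
  have hzero := hloc.hasFDerivAt_eq_zero dtot
  have happ := DFunLike.congr_fun hzero (gω + Hω v + ((M/2) * ‖v‖) • v)
  simp only [innerSL_apply_apply, ContinuousLinearMap.zero_apply] at happ
  exact inner_self_eq_zero.1 happ

theorem rpow34 (t : ℝ) (ht : 0 ≤ t) : (t^2) ^ ((3:ℝ)/4) = Real.sqrt t ^ 3 := by
  rw [show t^2 = (Real.sqrt t)^4 by rw [show (4:ℕ) = 2*2 from rfl, pow_mul, Real.sq_sqrt ht],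
    ← Real.rpow_natCast (Real.sqrt t) 4, ← Real.rpow_mul (Real.sqrt_nonneg t),
    ← Real.rpow_natCast (Real.sqrt t) 3]
  norm_num

theorem rpow32 (t : ℝ) (ht : 0 ≤ t) : t ^ ((3:ℝ)/2) = Real.sqrt t ^ 3 := by
  rw [Real.sqrt_eq_rpow, ← Real.rpow_natCast (t ^ ((1:ℝ)/2)) 3, ← Real.rpow_mul ht]
  norm_num

set_option maxHeartbeats 1000000 in
theorem pointwise (F : E → ℝ) (gradF : E → E) (hessF : E → E →L[ℝ] E)
    (L₂ : ℝ) (hL₂ : 0 < L₂)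
    (hgrad : ∀ z, HasGradientAt F (gradF z) z)
    (hhess : ∀ z, HasFDerivAt gradF (hessF z) z)
    (hlip : ∀ z w, ‖hessF z - hessF w‖ ≤ L₂ * ‖z - w‖)
    (x : E) (M η : ℝ) (hM : M ≥ 4 * L₂) (hη : 0 < η)
    (gω : E) (Hω : E →L[ℝ] E) (hHsymm : ∀ v w, ⟪Hω v, w⟫ = ⟪v, Hω w⟫)
    (yω : E) (hmem : yω ∈ Metric.closedBall x η)
    (hmin : IsMinOn
      (fun z => F x + ⟪gω, z - x⟫ + (1 / 2) * ⟪z - x, Hω (z - x)⟫ + M / 6 * ‖z - x‖ ^ 3)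
      (Metric.closedBall x η) yω) :
    F x - F yω ≥ (if M * η ^ 2 / 2 ≤ ‖gradF yω‖ then M * η ^ 3 / 60 else 0)
      - 9 / Real.sqrt M * (‖gradF x - gω‖ ^ 2) ^ ((3:ℝ)/4)
      - 5 * η ^ ((3:ℝ)/2) / Real.sqrt M * (‖hessF x - Hω‖ ^ 2) ^ ((3:ℝ)/4) := by
  have hMpos : 0 < M := by linarith
  set v : E := yω - x with hv
  set s : ℝ := ‖v‖ with hs
  have hs0 : 0 ≤ s := norm_nonneg _
  have hsle : s ≤ η := by
    have := hmem
    simp only [Metric.mem_closedBall, dist_eq_norm] at this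
    exact this
  set δg : ℝ := ‖gradF x - gω‖ with hδg
  set δH : ℝ := ‖hessF x - Hω‖ with hδH
  have hδg0 : 0 ≤ δg := norm_nonneg _
  have hδH0 : 0 ≤ δH := norm_nonneg _
  set ug : ℝ := Real.sqrt δg with hug
  set uH : ℝ := Real.sqrt δH with huH
  have hug2 : ug ^ 2 = δg := Real.sq_sqrt hδg0
  have huH2 : uH ^ 2 = δH := Real.sq_sqrt hδH0
  -- rewrite the rpow terms
  rw [show (δg ^ 2) ^ ((3:ℝ)/4) = ug ^ 3 from rpow34 δg hδg0,
    show (δH ^ 2) ^ ((3:ℝ)/4) = uH ^ 3 from rpow34 δH hδH0,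
    show η ^ ((3:ℝ)/2) = Real.sqrt η ^ 3 from rpow32 η hη.le]
  -- Step 1: model descent at z = x
  have hmodel : ⟪gω, v⟫ + (1/2) * ⟪v, Hω v⟫ + M/6 * s^3 ≤ 0 := by
    have hx : x ∈ Metric.closedBall x η := Metric.mem_closedBall_self hη.le
    have := isMinOn_iff.1 hmin x hx
    simp only [sub_self, inner_zero_right, inner_zero_left, map_zero, norm_zero] at this
    have h0 : (0:ℝ)^3 = 0 := by norm_num
    rw [h0] at this
    simp only [mul_zero, add_zero] at this
    linarith [this]
  -- Step 2: Taylor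
  have htaylor : F yω ≤ F x + ⟪gradF x, v⟫ + 1/2 * ⟪v, hessF x v⟫ + L₂/3 * s^3 := by
    have := taylor2 F gradF hessF L₂ hgrad hhess hlip hL₂.le x v
    rwa [show x + v = yω by rw [hv]; abel] at this
  -- Step 3: inner product bounds
  have hib1 : ⟪gradF x - gω, v⟫ ≤ δg * s := by
    have h := abs_real_inner_le_norm (gradF x - gω) v
    exact (abs_le.1 h).2.trans (le_of_eq rfl)
  have hib2 : ⟪v, (hessF x - Hω) v⟫ ≤ δH * s^2 := by
    have h := abs_real_inner_le_norm v ((hessF x - Hω) v)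
    have h2 : ‖(hessF x - Hω) v‖ ≤ δH * s := (hessF x - Hω).le_opNorm v
    have h3 : ‖v‖ * ‖(hessF x - Hω) v‖ ≤ s * (δH * s) := mul_le_mul_of_nonneg_left h2 hs0
    have h4 := (abs_le.1 h).2
    nlinarith [h4, h3]
  -- Step 4: descent inequality
  have hdescent : F x - F yω ≥ -(δg * s) - (δH * s^2)/2 + M * s^3/24 := by
    have hsplit1 : ⟪gω, v⟫ = ⟪gradF x, v⟫ - ⟪gradF x - gω, v⟫ := by
      rw [inner_sub_left]; ring
    have hsplit2 : ⟪v, Hω v⟫ = ⟪v, hessF x v⟫ - ⟪v, (hessF x - Hω) v⟫ := by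
      rw [ContinuousLinearMap.sub_apply, inner_sub_right]; ring
    rw [hsplit1, hsplit2] at hmodel
    have hL : L₂ ≤ M/4 := by linarith
    have hP : 0 ≤ (M/6 - L₂/3 - M/24) * s^3 :=
      mul_nonneg (by linarith) (pow_nonneg hs0 3)
    nlinarith [hP]
  -- Step 5: case split
  by_cases hA : M * η ^ 2 / 2 ≤ ‖gradF yω‖
  · -- event case: establish the constraint
    rw [if_pos hA]
    have hcon : ug^2 + uH^2*s + (3/4)*M*s^2 ≥ M*η^2/2 := by
      rw [hug2, huH2]
      rcases eq_or_lt_of_le hsle with heq | hlt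
      · rw [heq]
        have h1 : 0 ≤ δH * η := mul_nonneg hδH0 hη.le
        have h2 : 0 < M * (η * η) := mul_pos hMpos (mul_pos hη hη)
        nlinarith [h1, h2]
      · -- interior: stationarity
        have hst := stationary (F x) gω Hω hHsymm M η x yω hlt hmin
        have hgHv : gω + Hω v = -(((M/2) * s) • v) := by
          have h : (gω + Hω v) + ((M/2) * s) • v = 0 := hst
          rwa [add_eq_zero_iff_eq_neg] at h
        have hdecomp : gradF yω = (gradF yω - gradF x - hessF x v)
            + (gradF x - gω) + ((hessF x - Hω) v) + (gω + Hω v) := by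
          rw [ContinuousLinearMap.sub_apply]; abel
        have hn1 : ‖gradF yω - gradF x - hessF x v‖ ≤ L₂ * s^2 := by
          have := gradMVT F gradF hessF L₂ hhess hlip hL₂.le x yω
          rw [← hv, ← hs] at this
          exact this
        have hn3 : ‖(hessF x - Hω) v‖ ≤ δH * s := (hessF x - Hω).le_opNorm v
        have hn4 : ‖gω + Hω v‖ = (M/2) * s * s := by
          rw [hgHv, norm_neg, norm_smul, Real.norm_eq_abs,
            abs_of_nonneg (mul_nonneg (by linarith : (0:ℝ) ≤ M/2) hs0), ← hs]
        have hbound : ‖gradF yω‖ ≤ L₂ * s^2 + δg + δH * s + (M/2) * s * s := by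
          calc ‖gradF yω‖ = ‖(gradF yω - gradF x - hessF x v)
              + (gradF x - gω) + ((hessF x - Hω) v) + (gω + Hω v)‖ := by rw [← hdecomp]
            _ ≤ ‖(gradF yω - gradF x - hessF x v) + (gradF x - gω) + ((hessF x - Hω) v)‖
                + ‖gω + Hω v‖ := norm_add_le _ _
            _ ≤ (‖(gradF yω - gradF x - hessF x v) + (gradF x - gω)‖ + ‖(hessF x - Hω) v‖)
                + ‖gω + Hω v‖ := by linarith [norm_add_le ((gradF yω - gradF x - hessF x v) + (gradF x - gω)) ((hessF x - Hω) v)]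
            _ ≤ ((‖gradF yω - gradF x - hessF x v‖ + ‖gradF x - gω‖) + ‖(hessF x - Hω) v‖)
                + ‖gω + Hω v‖ := by linarith [norm_add_le (gradF yω - gradF x - hessF x v) (gradF x - gω)]
            _ ≤ L₂ * s^2 + δg + δH * s + (M/2) * s * s := by
                rw [hn4, ← hδg]; linarith
        have hL : L₂ ≤ M/4 := by linarith
        have hLs : L₂ * s^2 ≤ M/4 * s^2 := mul_le_mul_of_nonneg_right hL (sq_nonneg s)
        nlinarith [hA.trans hbound, hLs]
    have hkey := lemB' M η s ug uH hMpos hη hs0 hsle (Real.sqrt_nonneg _) (Real.sqrt_nonneg _) hcon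
    rw [hug2, huH2] at hkey
    have e1 : 9 / Real.sqrt M * ug ^ 3 = 9 * ug^3 / Real.sqrt M := by ring
    have e2 : 5 * Real.sqrt η ^ 3 / Real.sqrt M * uH ^ 3
        = 5 * Real.sqrt η ^ 3 * uH^3 / Real.sqrt M := by ring
    rw [e1, e2]
    linarith
  · rw [if_neg hA]
    have hkey := lemA' M η s ug uH hMpos hη hs0 hsle (Real.sqrt_nonneg _) (Real.sqrt_nonneg _)
    rw [hug2, huH2] at hkey
    have e1 : 9 / Real.sqrt M * ug ^ 3 = 9 * ug^3 / Real.sqrt M := by ring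
    have e2 : 5 * Real.sqrt η ^ 3 / Real.sqrt M * uH ^ 3
        = 5 * Real.sqrt η ^ 3 * uH^3 / Real.sqrt M := by ring
    rw [e1, e2]
    linarith


theorem rpow34_le_one_add (t : ℝ) (ht : 0 ≤ t) : t ^ ((3:ℝ)/4) ≤ 1 + t := by
  rcases le_or_gt t 1 with h | h
  · have := Real.rpow_le_one ht h (by norm_num : (0:ℝ) ≤ 3/4)
    linarith
  · have h2 : t ^ ((3:ℝ)/4) ≤ t ^ (1:ℝ) :=
      Real.rpow_le_rpow_of_exponent_le h.le (by norm_num)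
    rw [Real.rpow_one] at h2
    linarith

theorem jensen34 {Ω : Type*} [MeasurableSpace Ω] (μ : Measure Ω) [IsProbabilityMeasure μ]
    (Z : Ω → ℝ) (hZ0 : ∀ ω, 0 ≤ Z ω) (hZm : Measurable Z) (hZi : Integrable Z μ) :
    ∫ ω, (Z ω) ^ ((3:ℝ)/4) ∂μ ≤ (∫ ω, Z ω ∂μ) ^ ((3:ℝ)/4) := by
  have hconj : Real.HolderConjugate (4/3) 4 := Real.holderConjugate_iff.2 ⟨by norm_num, by norm_num⟩
  have h1 : MemLp Z 1 μ := memLp_one_iff_integrable.2 hZi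
  have hq0 : (ENNReal.ofReal (3/4)) ≠ 0 := by simp [ENNReal.ofReal_eq_zero]
  have hqt : (ENNReal.ofReal (3/4)) ≠ ⊤ := ENNReal.ofReal_ne_top
  have hmemf0 := (memLp_norm_rpow_iff (q := ENNReal.ofReal (3/4)) (p := 1)
    h1.aestronglyMeasurable hq0 hqt).2 h1
  have htoReal : (ENNReal.ofReal (3/4)).toReal = 3/4 := ENNReal.toReal_ofReal (by norm_num)
  have hdiv : (1 : ℝ≥0∞) / ENNReal.ofReal (3/4) = ENNReal.ofReal (4/3) := by
    rw [one_div, ← ENNReal.ofReal_inv_of_pos (by norm_num : (0:ℝ) < 3/4)]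
    norm_num
  rw [htoReal, hdiv] at hmemf0
  have hfeq : (fun x => ‖Z x‖ ^ ((3:ℝ)/4)) = fun ω => Z ω ^ ((3:ℝ)/4) :=
    funext fun ω => by rw [Real.norm_of_nonneg (hZ0 ω)]
  rw [hfeq] at hmemf0
  have hmem1 : MemLp (fun _ : Ω => (1:ℝ)) (ENNReal.ofReal 4) μ := memLp_const 1
  have key := integral_mul_le_Lp_mul_Lq_of_nonneg hconj
    (Filter.Eventually.of_forall fun ω => Real.rpow_nonneg (hZ0 ω) _)
    (Filter.Eventually.of_forall fun _ => zero_le_one) hmemf0 hmem1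
  simp only [mul_one] at key
  have he1 : ∫ ω, (Z ω ^ ((3:ℝ)/4)) ^ ((4:ℝ)/3) ∂μ = ∫ ω, Z ω ∂μ := by
    apply integral_congr_ae
    filter_upwards with ω
    rw [← Real.rpow_mul (hZ0 ω)]
    norm_num
  have he2 : ∫ _ : Ω, (1:ℝ) ^ ((4:ℝ)) ∂μ = 1 := by
    simp [Real.one_rpow]
  rw [he1, he2] at key
  rw [Real.one_rpow, mul_one] at key
  calc ∫ ω, (Z ω) ^ ((3:ℝ)/4) ∂μ ≤ (∫ ω, Z ω ∂μ) ^ (1/((4:ℝ)/3)) := key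
    _ = (∫ ω, Z ω ∂μ) ^ ((3:ℝ)/4) := by norm_num


/-- Expected descent for the cubic-regularized trust-region step with random
gradient/Hessian estimates `g`, `H`:
`E[F(x) - F(y)] ≥ (Mη³/60)·P(‖∇F(y)‖ ≥ Mη²/2) - (9/√M)(E‖∇F(x)-g‖²)^{3/4}
  - (5η^{3/2}/√M)(E‖∇²F(x)-H‖_op²)^{3/4}`. -/
theorem stmt_3 {d : ℕ} {Ω : Type*} [MeasurableSpace Ω]
    (μ : Measure Ω) [IsProbabilityMeasure μ]
    (F : EuclideanSpace ℝ (Fin d) → ℝ)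
    (gradF : EuclideanSpace ℝ (Fin d) → EuclideanSpace ℝ (Fin d))
    (hessF : EuclideanSpace ℝ (Fin d) →
      EuclideanSpace ℝ (Fin d) →L[ℝ] EuclideanSpace ℝ (Fin d))
    (L₂ : ℝ) (hL₂ : 0 < L₂)
    (hgrad : ∀ z, HasGradientAt F (gradF z) z)
    (hhess : ∀ z, HasFDerivAt gradF (hessF z) z)
    (hlip : ∀ z w, ‖hessF z - hessF w‖ ≤ L₂ * ‖z - w‖)
    (x : EuclideanSpace ℝ (Fin d))
    (M η : ℝ) (hM : M ≥ 4 * L₂) (hη : 0 < η)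
    (g : Ω → EuclideanSpace ℝ (Fin d))
    (H : Ω → EuclideanSpace ℝ (Fin d) →L[ℝ] EuclideanSpace ℝ (Fin d))
    (hHsymm : ∀ ω v w, ⟪H ω v, w⟫ = ⟪v, H ω w⟫)
    (hg_meas : Measurable g) (hH_meas : Measurable H)
    (hg2 : Integrable (fun ω => ‖gradF x - g ω‖ ^ 2) μ)
    (hH2 : Integrable (fun ω => ‖hessF x - H ω‖ ^ 2) μ)
    (y : Ω → EuclideanSpace ℝ (Fin d)) (hy_meas : Measurable y)
    (hy_mem : ∀ ω, y ω ∈ Metric.closedBall x η)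
    (hy_min : ∀ ω, IsMinOn
      (fun z => F x + ⟪g ω, z - x⟫ + (1 / 2) * ⟪z - x, H ω (z - x)⟫ + M / 6 * ‖z - x‖ ^ 3)
      (Metric.closedBall x η) (y ω))
    (hFy : Integrable (fun ω => F (y ω)) μ) :
    ∫ ω, (F x - F (y ω)) ∂μ ≥
      M * η ^ 3 / 60 * (μ {ω | ‖gradF (y ω)‖ ≥ M * η ^ 2 / 2}).toReal
      - 9 / Real.sqrt M * (∫ ω, ‖gradF x - g ω‖ ^ 2 ∂μ) ^ ((3 : ℝ) / 4)
      - 5 * η ^ ((3 : ℝ) / 2) / Real.sqrt M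
          * (∫ ω, ‖hessF x - H ω‖ ^ 2 ∂μ) ^ ((3 : ℝ) / 4) := by
  have hMpos : 0 < M := by linarith
  have hsM0 : 0 < Real.sqrt M := Real.sqrt_pos.2 hMpos
  have hgradF_cont : Continuous gradF :=
    continuous_iff_continuousAt.2 fun z => (hhess z).continuousAt
  set A : Set Ω := {ω | ‖gradF (y ω)‖ ≥ M * η ^ 2 / 2} with hA
  have hnm : Measurable fun ω => ‖gradF (y ω)‖ :=
    (hgradF_cont.norm.measurable).comp hy_meas
  have hA_meas : MeasurableSet A := measurableSet_le measurable_const hnm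
  set Zg : Ω → ℝ := fun ω => ‖gradF x - g ω‖ ^ 2 with hZg
  set ZH : Ω → ℝ := fun ω => ‖hessF x - H ω‖ ^ 2 with hZH
  have hZg0 : ∀ ω, 0 ≤ Zg ω := fun ω => sq_nonneg _
  have hZH0 : ∀ ω, 0 ≤ ZH ω := fun ω => sq_nonneg _
  have hZg_meas : Measurable Zg := (measurable_const.sub hg_meas).norm.pow_const 2
  have hZH_meas : Measurable ZH := (measurable_const.sub hH_meas).norm.pow_const 2
  have hZg34_meas : Measurable fun ω => Zg ω ^ ((3:ℝ)/4) := by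
    have he : (fun ω => Zg ω ^ ((3:ℝ)/4)) = fun ω => (Real.sqrt ‖gradF x - g ω‖)^3 :=
      funext fun ω => rpow34 _ (norm_nonneg _)
    rw [he]
    exact (Real.continuous_sqrt.measurable.comp
      (measurable_const.sub hg_meas).norm).pow_const 3
  have hZH34_meas : Measurable fun ω => ZH ω ^ ((3:ℝ)/4) := by
    have he : (fun ω => ZH ω ^ ((3:ℝ)/4)) = fun ω => (Real.sqrt ‖hessF x - H ω‖)^3 :=
      funext fun ω => rpow34 _ (norm_nonneg _)
    rw [he]
    exact (Real.continuous_sqrt.measurable.comp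
      (measurable_const.sub hH_meas).norm).pow_const 3
  have hZg34_int : Integrable (fun ω => Zg ω ^ ((3:ℝ)/4)) μ := by
    apply Integrable.mono' ((integrable_const (1:ℝ)).add hg2) hZg34_meas.aestronglyMeasurable
    filter_upwards with ω
    rw [Real.norm_of_nonneg (Real.rpow_nonneg (hZg0 ω) _)]
    exact rpow34_le_one_add _ (hZg0 ω)
  have hZH34_int : Integrable (fun ω => ZH ω ^ ((3:ℝ)/4)) μ := by
    apply Integrable.mono' ((integrable_const (1:ℝ)).add hH2) hZH34_meas.aestronglyMeasurable
    filter_upwards with ω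
    rw [Real.norm_of_nonneg (Real.rpow_nonneg (hZH0 ω) _)]
    exact rpow34_le_one_add _ (hZH0 ω)
  set f1 : Ω → ℝ := A.indicator (fun _ => M * η ^ 3 / 60) with hf1def
  have hf1_int : Integrable f1 μ := (integrable_const _).indicator hA_meas
  set f2 : Ω → ℝ := fun ω => 9 / Real.sqrt M * Zg ω ^ ((3:ℝ)/4) with hf2def
  set f3 : Ω → ℝ := fun ω => 5 * η ^ ((3:ℝ)/2) / Real.sqrt M * ZH ω ^ ((3:ℝ)/4) with hf3def
  have hf2_int : Integrable f2 μ := hZg34_int.const_mul _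
  have hf3_int : Integrable f3 μ := hZH34_int.const_mul _
  have hpt : ∀ ω, f1 ω - f2 ω - f3 ω ≤ F x - F (y ω) := by
    intro ω
    have hkey := pointwise F gradF hessF L₂ hL₂ hgrad hhess hlip x M η hM hη
      (g ω) (H ω) (hHsymm ω) (y ω) (hy_mem ω) (hy_min ω)
    have hind : f1 ω = if M * η ^ 2 / 2 ≤ ‖gradF (y ω)‖ then M * η ^ 3 / 60 else 0 := by
      rw [hf1def, Set.indicator_apply]
      congr 1
    rw [hind]
    exact hkey
  have hFxy_int : Integrable (fun ω => F x - F (y ω)) μ := (integrable_const (F x)).sub hFy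
  have hmono : ∫ ω, (f1 ω - f2 ω - f3 ω) ∂μ ≤ ∫ ω, (F x - F (y ω)) ∂μ :=
    integral_mono ((hf1_int.sub hf2_int).sub hf3_int) hFxy_int hpt
  have hsplit : ∫ ω, (f1 ω - f2 ω - f3 ω) ∂μ = (∫ ω, f1 ω ∂μ) - (∫ ω, f2 ω ∂μ) - ∫ ω, f3 ω ∂μ := by
    rw [integral_sub (f := fun ω => f1 ω - f2 ω) (g := f3) (hf1_int.sub hf2_int) hf3_int,
      integral_sub hf1_int hf2_int]
  have hi1 : ∫ ω, f1 ω ∂μ = M * η ^ 3 / 60 * (μ A).toReal := by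
    rw [hf1def, integral_indicator_const _ hA_meas, smul_eq_mul, mul_comm, Measure.real]
  have hi2 : ∫ ω, f2 ω ∂μ = 9 / Real.sqrt M * ∫ ω, Zg ω ^ ((3:ℝ)/4) ∂μ := by
    rw [hf2def, integral_const_mul]
  have hi3 : ∫ ω, f3 ω ∂μ
      = 5 * η ^ ((3:ℝ)/2) / Real.sqrt M * ∫ ω, ZH ω ^ ((3:ℝ)/4) ∂μ := by
    rw [hf3def, integral_const_mul]
  have hJg := jensen34 μ Zg hZg0 hZg_meas hg2
  have hJH := jensen34 μ ZH hZH0 hZH_meas hH2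
  have hc2 : (0:ℝ) ≤ 9 / Real.sqrt M := by positivity
  have hc3 : (0:ℝ) ≤ 5 * η ^ ((3:ℝ)/2) / Real.sqrt M := by
    have : (0:ℝ) ≤ η ^ ((3:ℝ)/2) := Real.rpow_nonneg hη.le _
    positivity
  have hm2 := mul_le_mul_of_nonneg_left hJg hc2
  have hm3 := mul_le_mul_of_nonneg_left hJH hc3
  rw [hsplit, hi1, hi2, hi3] at hmono
  calc M * η ^ 3 / 60 * (μ {ω | ‖gradF (y ω)‖ ≥ M * η ^ 2 / 2}).toReal
      - 9 / Real.sqrt M * (∫ ω, ‖gradF x - g ω‖ ^ 2 ∂μ) ^ ((3 : ℝ) / 4)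
      - 5 * η ^ ((3 : ℝ) / 2) / Real.sqrt M * (∫ ω, ‖hessF x - H ω‖ ^ 2 ∂μ) ^ ((3 : ℝ) / 4)
      ≤ M * η ^ 3 / 60 * (μ A).toReal - 9 / Real.sqrt M * ∫ ω, Zg ω ^ ((3:ℝ)/4) ∂μ
        - 5 * η ^ ((3:ℝ)/2) / Real.sqrt M * ∫ ω, ZH ω ^ ((3:ℝ)/4) ∂μ := by
        have : A = {ω | ‖gradF (y ω)‖ ≥ M * η ^ 2 / 2} := hA
        rw [← this]
        linarith [hm2, hm3]
    _ ≤ ∫ ω, (F x - F (y ω)) ∂μ := hmono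
end

section
/- Let F : ℝ^d → ℝ be twice differentiable with L₂-Lipschitz Hessian, let (Z, P_z) be a probability space, and let ĝ : ℝ^d × Z → ℝ^d satisfy: (i) E_{z∼P_z}[ĝ(x, z)] = ∇F(x) for all x ∈ ℝ^d, and (ii) the mean-squared smoothness property E_{z∼P_z}‖ĝ(x, z) − ĝ(y, z) − (∇F(x) − ∇F(y))‖² ≤ σ_mss²·‖x − y‖² for all x, y ∈ ℝ^d. Fix δ > 0, x ∈ ℝ^d and a unit vector u ∈ ℝ^d, and define the finite-difference Hessian-vector product estimator Ĥ_δ(x, z)u := (1/δ)·(ĝ(x + δ·u, z) − ĝ(x, z)). Then ‖E_{z∼P_z}[Ĥ_δ(x, z)u] − ∇²F(x)u‖ ≤ L₂δ/2 and E_{z∼P_z}‖Ĥ_δ(x, z)u − ∇²F(x)u‖² ≤ σ_mss² + L₂²δ²/4. -/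
open MeasureTheory
open scoped RealInnerProductSpace

section aux

variable {E : Type*} [NormedAddCommGroup E] [NormedSpace ℝ E]

/-- Taylor-type bound: if the derivative of `g` is `L`-Lipschitz (as a map to
continuous linear maps), then `‖g (p+w) - g p - H p w‖ ≤ L/2 * ‖w‖²`. -/
lemma taylor_grad_bound {g : E → E} {H : E → E →L[ℝ] E} {L : ℝ}
    (hH : ∀ z, HasFDerivAt g (H z) z)
    (hlip : ∀ z w, ‖H z - H w‖ ≤ L * ‖z - w‖)
    (p w : E) : ‖g (p + w) - g p - H p w‖ ≤ L / 2 * ‖w‖ ^ 2 := by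
  set f : ℝ → E := fun t => g (p + t • w) - g p - t • H p w with hf
  have hderiv : ∀ t : ℝ, HasDerivAt f (H (p + t • w) w - H p w) t := by
    intro t
    have h1 : HasDerivAt (fun t : ℝ => p + t • w) w t := by
      simpa using ((hasDerivAt_id t).smul_const w).const_add p
    have h2 : HasDerivAt (fun t : ℝ => g (p + t • w)) (H (p + t • w) w) t :=
      (hH (p + t • w)).comp_hasDerivAt t h1
    have h3 : HasDerivAt (fun t : ℝ => t • H p w) (H p w) t := by
      simpa using (hasDerivAt_id t).smul_const (H p w)
    exact (h2.sub_const (g p)).sub h3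
  have hbound := image_norm_le_of_norm_deriv_right_le_deriv_boundary
    (f := f) (f' := fun t => H (p + t • w) w - H p w) (a := 0) (b := 1)
    (B := fun t => L * ‖w‖ ^ 2 / 2 * t ^ 2) (B' := fun t => L * ‖w‖ ^ 2 / 2 * (2 * t))
    (fun t _ => (hderiv t).continuousAt.continuousWithinAt)
    (fun t _ => (hderiv t).hasDerivWithinAt)
    (by simp [hf])
    (fun t => by
      simpa using (hasDerivAt_pow 2 t).const_mul (L * ‖w‖ ^ 2 / 2))
    (fun t ht => by
      have h1 : H (p + t • w) w - H p w = (H (p + t • w) - H p) w := by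
        simp
      have h2 : ‖H (p + t • w) w - H p w‖ ≤ ‖H (p + t • w) - H p‖ * ‖w‖ := by
        rw [h1]; exact (H (p + t • w) - H p).le_opNorm w
      have h3 : ‖H (p + t • w) - H p‖ ≤ L * (t * ‖w‖) := by
        have := hlip (p + t • w) p
        simpa [norm_smul, abs_of_nonneg ht.1] using this
      calc ‖H (p + t • w) w - H p w‖ ≤ L * (t * ‖w‖) * ‖w‖ :=
            h2.trans (by
              exact mul_le_mul_of_nonneg_right h3 (norm_nonneg _))
        _ = L * ‖w‖ ^ 2 / 2 * (2 * t) := by ring)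
  have h1 : ‖f 1‖ ≤ L * ‖w‖ ^ 2 / 2 * 1 ^ 2 := hbound (Set.right_mem_Icc.2 zero_le_one)
  have h2 : f 1 = g (p + w) - g p - H p w := by simp [hf]
  rw [h2] at h1
  calc ‖g (p + w) - g p - H p w‖ ≤ L * ‖w‖ ^ 2 / 2 * 1 ^ 2 := h1
    _ = L / 2 * ‖w‖ ^ 2 := by ring

end aux

/-- The finite-difference Hessian-vector product estimator
`Ĥ_δ(x,z)u := (1/δ)(gEst(x+δu,z) - gEst(x,z))` built from an unbiased,
mean-squared-smooth stochastic gradient estimator `gEst` has bias at most `L₂δ/2` and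
second moment error at most `σ_mss² + L₂²δ²/4` relative to `∇²F(x)u`. -/
theorem stmt_6 {d : ℕ} {Z : Type*} [MeasurableSpace Z]
    (P : Measure Z) [IsProbabilityMeasure P]
    (F : EuclideanSpace ℝ (Fin d) → ℝ)
    (gradF : EuclideanSpace ℝ (Fin d) → EuclideanSpace ℝ (Fin d))
    (hessF : EuclideanSpace ℝ (Fin d) →
      EuclideanSpace ℝ (Fin d) →L[ℝ] EuclideanSpace ℝ (Fin d))
    (L₂ : ℝ)
    (hgrad : ∀ z, HasGradientAt F (gradF z) z)
    (hhess : ∀ z, HasFDerivAt gradF (hessF z) z)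
    (hlip : ∀ z w, ‖hessF z - hessF w‖ ≤ L₂ * ‖z - w‖)
    (gEst : EuclideanSpace ℝ (Fin d) → Z → EuclideanSpace ℝ (Fin d))
    (σmss : ℝ)
    (hg_int : ∀ x, Integrable (gEst x) P)
    (hg_unbiased : ∀ x, ∫ z, gEst x z ∂P = gradF x)
    (hmss_int : ∀ x y,
      Integrable (fun z => ‖gEst x z - gEst y z - (gradF x - gradF y)‖ ^ 2) P)
    (hmss : ∀ x y,
      ∫ z, ‖gEst x z - gEst y z - (gradF x - gradF y)‖ ^ 2 ∂P ≤ σmss ^ 2 * ‖x - y‖ ^ 2)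
    (δ : ℝ) (hδ : 0 < δ)
    (x u : EuclideanSpace ℝ (Fin d)) (hu : ‖u‖ = 1) :
    ‖(∫ z, (1 / δ) • (gEst (x + δ • u) z - gEst x z) ∂P) - hessF x u‖ ≤ L₂ * δ / 2 ∧
    ∫ z, ‖(1 / δ) • (gEst (x + δ • u) z - gEst x z) - hessF x u‖ ^ 2 ∂P
      ≤ σmss ^ 2 + L₂ ^ 2 * δ ^ 2 / 4 := by
  have hδu : ‖δ • u‖ = δ := by
    rw [norm_smul, hu, Real.norm_eq_abs, abs_of_pos hδ, mul_one]
  -- the deterministic bias vector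
  set b : EuclideanSpace ℝ (Fin d) :=
    (1 / δ) • (gradF (x + δ • u) - gradF x) - hessF x u with hbdef
  have hb : ‖b‖ ≤ L₂ * δ / 2 := by
    have key := taylor_grad_bound hhess hlip x (δ • u)
    have hδb : δ • b = gradF (x + δ • u) - gradF x - hessF x (δ • u) := by
      have hms : hessF x (δ • u) = δ • hessF x u := _root_.map_smul (hessF x) δ u
      rw [hbdef, smul_sub, smul_smul, mul_one_div, div_self hδ.ne', one_smul, hms]
    have h2 : δ * ‖b‖ ≤ L₂ / 2 * δ ^ 2 := by
      rw [← hδb, norm_smul, Real.norm_eq_abs, abs_of_pos hδ, hδu] at key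
      exact key
    have h3 : δ * ‖b‖ ≤ δ * (L₂ * δ / 2) := by
      rw [show δ * (L₂ * δ / 2) = L₂ / 2 * δ ^ 2 by ring]
      exact h2
    exact le_of_mul_le_mul_left h3 hδ
  -- the integral of the estimator
  have hint : (∫ z, (1 / δ) • (gEst (x + δ • u) z - gEst x z) ∂P)
      = (1 / δ) • (gradF (x + δ • u) - gradF x) := by
    rw [integral_smul, integral_sub (hg_int _) (hg_int _), hg_unbiased, hg_unbiased]
  constructor
  · rw [hint]; exact hb
  -- second moment
  · set D : Z → EuclideanSpace ℝ (Fin d) :=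
      fun z => (1 / δ) • (gEst (x + δ • u) z - gEst x z - (gradF (x + δ • u) - gradF x))
      with hDdef
    have hpt : ∀ z, (1 / δ) • (gEst (x + δ • u) z - gEst x z) - hessF x u = D z + b := by
      intro z
      rw [hDdef, hbdef]
      simp only [smul_sub]
      abel
    -- integrability facts
    have hDint : Integrable D P := by
      exact ((((hg_int _).sub (hg_int _)).sub (integrable_const _)).smul (1 / δ))
    have hDsq : Integrable (fun z => ‖D z‖ ^ 2) P := by
      have : (fun z => ‖D z‖ ^ 2) = fun z =>
          (1 / δ) ^ 2 * ‖gEst (x + δ • u) z - gEst x z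
            - (gradF (x + δ • u) - gradF x)‖ ^ 2 := by
        funext z
        rw [hDdef, norm_smul, mul_pow, Real.norm_eq_abs, sq_abs]
      rw [this]
      exact (hmss_int _ _).const_mul _
    have hDinner : Integrable (fun z => ⟪D z, b⟫) P := by
      exact ((innerSL ℝ (E := EuclideanSpace ℝ (Fin d))).flip b).integrable_comp hDint
    -- mean zero of D
    have hDzero : (∫ z, D z ∂P) = 0 := by
      have hsub : Integrable (fun z => gEst (x + δ • u) z - gEst x z) P :=
        (hg_int _).sub (hg_int _)
      rw [hDdef]
      rw [integral_smul, integral_sub hsub (integrable_const _),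
        integral_sub (hg_int _) (hg_int _), hg_unbiased, hg_unbiased,
        integral_const]
      simp
    have hinner_zero : (∫ z, ⟪D z, b⟫ ∂P) = 0 := by
      have h2 : (∫ z, ⟪D z, b⟫ ∂P) = ⟪∫ z, D z ∂P, b⟫ :=
        ((innerSL ℝ (E := EuclideanSpace ℝ (Fin d))).flip b).integral_comp_comm hDint
      rw [hDzero, inner_zero_left] at h2
      exact h2
    -- bound on the variance term
    have hvar : (∫ z, ‖D z‖ ^ 2 ∂P) ≤ σmss ^ 2 := by
      have : (fun z => ‖D z‖ ^ 2) = fun z =>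
          (1 / δ) ^ 2 * ‖gEst (x + δ • u) z - gEst x z
            - (gradF (x + δ • u) - gradF x)‖ ^ 2 := by
        funext z
        rw [hDdef, norm_smul, mul_pow, Real.norm_eq_abs, sq_abs]
      rw [this, integral_const_mul]
      have hm := hmss (x + δ • u) x
      rw [add_sub_cancel_left, hδu] at hm
      calc (1 / δ) ^ 2 * ∫ z, ‖gEst (x + δ • u) z - gEst x z
              - (gradF (x + δ • u) - gradF x)‖ ^ 2 ∂P
          ≤ (1 / δ) ^ 2 * (σmss ^ 2 * δ ^ 2) :=
            mul_le_mul_of_nonneg_left hm (by positivity)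
        _ = σmss ^ 2 := by field_simp
    -- expand the square
    have hexp : (∫ z, ‖(1 / δ) • (gEst (x + δ • u) z - gEst x z) - hessF x u‖ ^ 2 ∂P)
        = (∫ z, ‖D z‖ ^ 2 ∂P) + 2 * (∫ z, ⟪D z, b⟫ ∂P) + ‖b‖ ^ 2 := by
      have h1 : ∀ z, ‖(1 / δ) • (gEst (x + δ • u) z - gEst x z) - hessF x u‖ ^ 2
          = ‖D z‖ ^ 2 + 2 * ⟪D z, b⟫ + ‖b‖ ^ 2 := by
        intro z; rw [hpt z, norm_add_sq_real]
      simp_rw [h1]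
      have hA : Integrable (fun z => ‖D z‖ ^ 2 + 2 * ⟪D z, b⟫) P :=
        hDsq.add (hDinner.const_mul 2)
      rw [integral_add hA (integrable_const _),
        integral_add hDsq (hDinner.const_mul 2), integral_const_mul, integral_const]
      simp
    rw [hexp, hinner_zero]
    have hbsq : ‖b‖ ^ 2 ≤ L₂ ^ 2 * δ ^ 2 / 4 := by
      have h := pow_le_pow_left₀ (norm_nonneg b) hb 2
      calc ‖b‖ ^ 2 ≤ (L₂ * δ / 2) ^ 2 := h
        _ = L₂ ^ 2 * δ ^ 2 / 4 := by ring
    linarith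
end

section
/- Let Λ : ℝ → ℝ be defined by Λ(x) = 8(e^{−x²/2} − 1). Then Λ is infinitely differentiable and for every k ≥ 1, sup_{x∈ℝ} |Λ^{(k)}(x)| ≤ (8/√e)·(3(k+1)/2)^{3(k+1)/2}. -/
open Polynomial Real Nat

-- coefficient bound
lemma hermite_coeff_abs_le (n : ℕ) : ∀ k, |(hermite n).coeff k| ≤ (n ! : ℤ) := by
  induction n with
  | zero =>
    intro k
    rw [hermite_zero]
    rcases eq_or_ne k 0 with rfl | h
    · simp
    · rw [coeff_C, if_neg h]; simp
  | succ n ih =>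
    intro k
    have hfac : ((n+1)! : ℤ) = (n+1) * (n ! : ℤ) := by
      push_cast [Nat.factorial_succ]; ring
    have hmono : (n ! : ℤ) ≤ ((n+1)! : ℤ) := by
      have := Nat.factorial_le (Nat.le_succ n)
      exact_mod_cast this
    cases k with
    | zero =>
      rw [coeff_hermite_succ_zero, abs_neg]
      exact le_trans (ih 1) hmono
    | succ k =>
      rw [coeff_hermite_succ_succ]
      by_cases h : n < k + 2
      · rw [coeff_hermite_of_lt h, mul_zero, sub_zero]
        exact le_trans (ih k) hmono
      · push_neg at h
        have h1 := ih k
        have h2 := ih (k + 2)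
        have habs : |(hermite n).coeff k - ((k:ℤ) + 2) * (hermite n).coeff (k+2)|
            ≤ |(hermite n).coeff k| + ((k:ℤ)+2) * |(hermite n).coeff (k+2)| := by
          calc _ ≤ |(hermite n).coeff k| + |((k:ℤ) + 2) * (hermite n).coeff (k+2)| :=
                abs_sub _ _
            _ = _ := by rw [abs_mul, abs_of_nonneg (by positivity : (0:ℤ) ≤ (k:ℤ)+2)]
        refine le_trans habs ?_
        have hk3 : (k:ℤ) + 3 ≤ (n:ℤ) + 1 := by exact_mod_cast by omega
        have hfpos : (0:ℤ) < (n ! : ℤ) := by exact_mod_cast n.factorial_pos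
        calc |(hermite n).coeff k| + ((k:ℤ)+2) * |(hermite n).coeff (k+2)|
            ≤ (n ! : ℤ) + ((k:ℤ)+2) * (n ! : ℤ) := by
              have := mul_le_mul_of_nonneg_left h2 (by positivity : (0:ℤ) ≤ (k:ℤ)+2)
              linarith
          _ = ((k:ℤ)+3) * (n ! : ℤ) := by ring
          _ ≤ ((n:ℤ)+1) * (n ! : ℤ) := by
              exact mul_le_mul_of_nonneg_right hk3 hfpos.le
          _ = ((n+1)! : ℤ) := hfac.symm

-- geometric sum bound
lemma geom_sum_le_pow (t : ℝ) (ht : 0 ≤ t) : ∀ n : ℕ,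
    ∑ i ∈ Finset.range (n+1), t ^ i ≤ (1 + t) ^ n := by
  intro n
  induction n with
  | zero => simp
  | succ n ih =>
    rw [Finset.sum_range_succ]
    have h1 : t ^ (n+1) ≤ t * (1+t)^n := by
      rw [pow_succ, mul_comm]
      exact mul_le_mul_of_nonneg_left (pow_le_pow_left₀ ht (by linarith) n) ht
    calc (∑ i ∈ Finset.range (n+1), t ^ i) + t ^ (n+1)
        ≤ (1+t)^n + t * (1+t)^n := add_le_add ih h1
      _ = (1+t)^(n+1) := by ring

lemma hermite_eval_bound (n : ℕ) (x : ℝ) :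
    |(aeval x (hermite n) : ℝ)| ≤ (n ! : ℝ) * (1 + |x|) ^ n := by
  have hq : (aeval x (hermite n) : ℝ) = ((hermite n).map (algebraMap ℤ ℝ)).eval x := by
    rw [aeval_def, eval_map]
  have hdeg : ((hermite n).map (algebraMap ℤ ℝ)).natDegree < n + 1 :=
    lt_of_le_of_lt natDegree_map_le (by rw [natDegree_hermite]; omega)
  rw [hq, eval_eq_sum_range' hdeg]
  refine le_trans (Finset.abs_sum_le_sum_abs _ _) ?_
  have hterm : ∀ i ∈ Finset.range (n+1),
      |((hermite n).map (algebraMap ℤ ℝ)).coeff i * x ^ i| ≤ (n ! : ℝ) * |x| ^ i := by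
    intro i _
    rw [abs_mul, abs_pow, coeff_map]
    refine mul_le_mul_of_nonneg_right ?_ (by positivity)
    have := hermite_coeff_abs_le n i
    calc |(algebraMap ℤ ℝ) ((hermite n).coeff i)| = ((|(hermite n).coeff i| : ℤ) : ℝ) := by
          simp [Int.cast_abs]
      _ ≤ ((n ! : ℤ) : ℝ) := by exact_mod_cast this
      _ = (n ! : ℝ) := by push_cast; ring
  refine le_trans (Finset.sum_le_sum hterm) ?_
  rw [← Finset.mul_sum]
  exact mul_le_mul_of_nonneg_left (geom_sum_le_pow |x| (abs_nonneg x) n) (by positivity)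

lemma one_add_pow_le (k : ℕ) (hk : 1 ≤ k) (s : ℝ) (hs : 0 ≤ s) :
    (1 + s) ^ k ≤ (k : ℝ) ^ k * Real.exp (1 + s - k) := by
  have hk0 : (0:ℝ) < k := by exact_mod_cast hk
  set u : ℝ := (1 + s) / k with hu_def
  have hu0 : 0 ≤ u := by positivity
  have hue : u ≤ Real.exp (u - 1) := by
    have := Real.add_one_le_exp (u - 1); linarith
  have h1 : u ^ k ≤ Real.exp (u - 1) ^ k := pow_le_pow_left₀ hu0 hue k
  have h2 : Real.exp (u - 1) ^ k = Real.exp (k * (u - 1)) := by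
    rw [← Real.exp_nat_mul]
  have h3 : (k:ℝ) * (u - 1) = 1 + s - k := by
    rw [hu_def]; field_simp <;> ring
  have h4 : (1 + s) = (k:ℝ) * u := by rw [hu_def]; field_simp <;> ring
  calc (1 + s) ^ k = ((k:ℝ) * u) ^ k := by rw [← h4]
    _ = (k:ℝ)^k * u^k := mul_pow _ _ _
    _ ≤ (k:ℝ)^k * Real.exp (1 + s - k) := by
        rw [h2, h3] at h1
        exact mul_le_mul_of_nonneg_left h1 (by positivity)

lemma gauss_bound (k : ℕ) (hk : 1 ≤ k) (x : ℝ) :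
    (1 + |x|) ^ k * Real.exp (-(x^2/2)) ≤
      Real.sqrt (Real.exp 1) * Real.sqrt ((k:ℝ)^k) := by
  have hL : 0 < (1 + |x|) ^ k * Real.exp (-(x^2/2)) := by positivity
  rw [← Real.sqrt_mul (Real.exp_pos 1).le]
  rw [Real.le_sqrt' hL]
  -- goal : ((1+|x|)^k * exp(-(x^2/2)))^2 ≤ exp 1 * k^k
  have hsq : ((1 + |x|) ^ k * Real.exp (-(x^2/2)))^2
      = ((1 + |x|)^2)^k * Real.exp (-x^2) := by
    rw [mul_pow, ← pow_mul, mul_comm k 2, pow_mul, sq (Real.exp _), ← Real.exp_add]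
    norm_num
    left; ring
  rw [hsq]
  have h1 : ((1 + |x|)^2)^k ≤ (2 * (1 + x^2))^k := by
    apply pow_le_pow_left₀ (by positivity)
    nlinarith [sq_abs x, sq_nonneg (1 - |x|)]
  have h2 : (2 * (1 + x^2))^k * Real.exp (-x^2) ≤ Real.exp 1 * (k:ℝ)^k := by
    have hb := one_add_pow_le k hk (x^2) (sq_nonneg x)
    have h2k : (2:ℝ)^k ≤ Real.exp 1 ^ k := by
      apply pow_le_pow_left₀ (by norm_num)
      have := Real.exp_one_gt_d9; linarith
    calc (2 * (1 + x^2))^k * Real.exp (-x^2)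
        = 2^k * ((1 + x^2)^k * Real.exp (-x^2)) := by rw [mul_pow]; ring
      _ ≤ 2^k * ((k:ℝ)^k * Real.exp (1 + x^2 - k) * Real.exp (-x^2)) := by
          apply mul_le_mul_of_nonneg_left _ (by positivity)
          exact mul_le_mul_of_nonneg_right hb (Real.exp_pos _).le
      _ = (k:ℝ)^k * (2^k * Real.exp (1 - k)) := by
          rw [mul_assoc, ← Real.exp_add, show 1 + x^2 - (k:ℝ) + -x^2 = 1 - k by ring]; ring
      _ ≤ (k:ℝ)^k * Real.exp 1 := by
          apply mul_le_mul_of_nonneg_left _ (by positivity)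
          have : (2:ℝ)^k * Real.exp (1 - k) ≤ Real.exp 1 ^ k * Real.exp (1 - k) :=
            mul_le_mul_of_nonneg_right h2k (Real.exp_pos _).le
          refine this.trans ?_
          rw [← Real.exp_nat_mul, ← Real.exp_add]
          apply Real.exp_le_exp.mpr
          have : (1:ℝ) ≤ k := by exact_mod_cast hk
          nlinarith
      _ = Real.exp 1 * (k:ℝ)^k := mul_comm _ _
    
  calc ((1 + |x|)^2)^k * Real.exp (-x^2) ≤ (2 * (1 + x^2))^k * Real.exp (-x^2) :=
        mul_le_mul_of_nonneg_right h1 (Real.exp_pos _).le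
    _ ≤ Real.exp 1 * (k:ℝ)^k := h2

lemma final_numeric (k : ℕ) (hk : 1 ≤ k) :
    Real.exp 1 * (k ! : ℝ) * Real.sqrt ((k:ℝ)^k) ≤
      (3 * ((k : ℝ) + 1) / 2) ^ (3 * ((k : ℝ) + 1) / 2) := by
  set a : ℝ := 3 * ((k : ℝ) + 1) / 2 with ha_def
  have hk1 : (1:ℝ) ≤ (k:ℝ) := by exact_mod_cast hk
  have ha3 : (3:ℝ) ≤ a := by rw [ha_def]; linarith
  have ha0 : (0:ℝ) < a := by linarith
  have hka : (k:ℝ) ≤ a := by rw [ha_def]; linarith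
  -- sqrt(k^k) = k ^ ((k:ℝ)/2) as rpow
  have hsqrt : Real.sqrt ((k:ℝ)^k) = (k:ℝ) ^ ((k:ℝ)/2) := by
    rw [Real.sqrt_eq_rpow, ← Real.rpow_natCast (k:ℝ) k, ← Real.rpow_mul (by positivity)]
    norm_num
    rw [show (k:ℝ) * (1/2) = (k:ℝ)/2 by ring]
  have hfact : (k ! : ℝ) ≤ (k:ℝ) ^ (k:ℝ) := by
    rw [Real.rpow_natCast]
    exact_mod_cast Nat.factorial_le_pow k
  have hstep : Real.exp 1 * (k ! : ℝ) * Real.sqrt ((k:ℝ)^k)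
      ≤ Real.exp 1 * ((k:ℝ) ^ (3 * (k:ℝ) / 2)) := by
    rw [hsqrt, show (3 * (k:ℝ) / 2) = (k:ℝ) + (k:ℝ)/2 by ring,
      Real.rpow_add (by linarith : (0:ℝ) < (k:ℝ)), mul_assoc]
    apply mul_le_mul_of_nonneg_left _ (Real.exp_pos 1).le
    exact mul_le_mul_of_nonneg_right hfact (by positivity)
  refine hstep.trans ?_
  have hsplit : a ^ a = a ^ (3 * (k:ℝ) / 2) * a ^ ((3:ℝ)/2) := by
    rw [← Real.rpow_add ha0, ha_def]; ring_nf
  rw [hsplit, mul_comm (a ^ (3 * (k:ℝ) / 2))]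
  apply mul_le_mul
  · -- exp 1 ≤ a ^ (3/2)
    have h1 : Real.exp 1 ≤ 3 := by have := Real.exp_one_lt_d9; linarith
    have h2 : (3:ℝ) = a ^ (1:ℝ) → True := fun _ => trivial
    have h3 : a ^ (1:ℝ) ≤ a ^ ((3:ℝ)/2) :=
      Real.rpow_le_rpow_of_exponent_le (by linarith) (by norm_num)
    rw [Real.rpow_one] at h3
    linarith
  · exact Real.rpow_le_rpow (by positivity) hka (by positivity)
  · positivity
  · positivity

/-- The component function `Λ` of the hard-instance construction. -/
noncomputable def Lam (x : ℝ) : ℝ := 8 * (Real.exp (-x ^ 2 / 2) - 1)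

/-- `Λ` is `C^∞` and for every `k ≥ 1`,
`sup_x |Λ^{(k)}(x)| ≤ (8/√e)·(3(k+1)/2)^{3(k+1)/2}`. -/
theorem stmt_10 :
    ContDiff ℝ (⊤ : ℕ∞) Lam ∧
    ∀ k : ℕ, 1 ≤ k → ∀ x : ℝ,
      |iteratedDeriv k Lam x| ≤
        8 / Real.sqrt (Real.exp 1) *
          (3 * ((k : ℝ) + 1) / 2) ^ (3 * ((k : ℝ) + 1) / 2) := by
  set g : ℝ → ℝ := fun y : ℝ => Real.exp (-(y ^ 2 / 2)) with hg_def
  have hgsmooth : ContDiff ℝ (⊤ : ℕ∞) g :=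
    Real.contDiff_exp.comp (((contDiff_id.pow 2).div_const 2).neg)
  have hLam_eq : Lam = fun y : ℝ => 8 * g y - 8 := by
    funext y; simp only [Lam, hg_def, neg_div]; ring
  have hLamSmooth : ContDiff ℝ (⊤ : ℕ∞) Lam := by
    rw [hLam_eq]; exact (contDiff_const.mul hgsmooth).sub contDiff_const
  refine ⟨hLamSmooth, ?_⟩
  intro k hk x
  obtain ⟨m, rfl⟩ : ∃ m, k = m + 1 := ⟨k - 1, by omega⟩
  -- derivative of Lam is 8 * deriv g
  have hgdiff : Differentiable ℝ g := hgsmooth.differentiable (by norm_num)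
  have hderiv : deriv Lam = fun y => 8 * deriv g y := by
    funext y
    rw [hLam_eq, deriv_fun_sub ((hgdiff y).const_mul 8) (differentiableAt_const 8),
      deriv_const, sub_zero, deriv_const_mul 8 (hgdiff y)]
  have hdg_smooth : ContDiff ℝ (⊤ : ℕ∞) (deriv g) := (contDiff_infty_iff_deriv.mp hgsmooth).2
  have hkey : iteratedDeriv (m+1) Lam x = 8 * iteratedDeriv (m+1) g x := by
    rw [iteratedDeriv_succ', hderiv, iteratedDeriv_succ' (f := g)]
    rw [← iteratedDerivWithin_univ, ← iteratedDerivWithin_univ]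
    exact iteratedDerivWithin_const_mul (Set.mem_univ x) uniqueDiffOn_univ 8
      ((hdg_smooth.of_le (by exact_mod_cast (le_top : (m:ℕ∞) ≤ ⊤))).contDiffWithinAt)
  have hgauss : iteratedDeriv (m+1) g x
      = (-1:ℝ)^(m+1) * aeval x (hermite (m+1)) * Real.exp (-(x^2/2)) := by
    rw [iteratedDeriv_eq_iterate, hg_def]
    exact Polynomial.deriv_gaussian_eq_hermite_mul_gaussian (m+1) x
  set k := m + 1
  have hk1 : 1 ≤ k := by omega
  rw [hkey, hgauss]
  have habs : |8 * ((-1:ℝ)^k * aeval x (hermite k) * Real.exp (-(x^2/2)))|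
      = 8 * (|(aeval x (hermite k) : ℝ)| * Real.exp (-(x^2/2))) := by
    rw [abs_mul, abs_mul, abs_mul, abs_pow, abs_neg, abs_one, one_pow, one_mul,
      abs_of_nonneg (Real.exp_pos _).le, abs_of_nonneg (by norm_num : (0:ℝ) ≤ 8)]
  rw [habs]
  have hbound : |(aeval x (hermite k) : ℝ)| * Real.exp (-(x^2/2))
      ≤ (k ! : ℝ) * (Real.sqrt (Real.exp 1) * Real.sqrt ((k:ℝ)^k)) := by
    calc |(aeval x (hermite k) : ℝ)| * Real.exp (-(x^2/2))
        ≤ ((k ! : ℝ) * (1 + |x|)^k) * Real.exp (-(x^2/2)) :=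
          mul_le_mul_of_nonneg_right (hermite_eval_bound k x) (Real.exp_pos _).le
      _ = (k ! : ℝ) * ((1 + |x|)^k * Real.exp (-(x^2/2))) := by ring
      _ ≤ (k ! : ℝ) * (Real.sqrt (Real.exp 1) * Real.sqrt ((k:ℝ)^k)) :=
          mul_le_mul_of_nonneg_left (gauss_bound k hk1 x) (by positivity)
  have hse : (0:ℝ) < Real.sqrt (Real.exp 1) := Real.sqrt_pos.mpr (Real.exp_pos 1)
  have hfin := final_numeric k hk1
  calc 8 * (|(aeval x (hermite k) : ℝ)| * Real.exp (-(x^2/2)))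
      ≤ 8 * ((k ! : ℝ) * (Real.sqrt (Real.exp 1) * Real.sqrt ((k:ℝ)^k))) :=
        mul_le_mul_of_nonneg_left hbound (by norm_num)
    _ ≤ 8 / Real.sqrt (Real.exp 1)
        * (3 * ((k : ℝ) + 1) / 2) ^ (3 * ((k : ℝ) + 1) / 2) := by
        rw [div_mul_eq_mul_div, le_div_iff₀ hse]
        have hsqsq : Real.sqrt (Real.exp 1) * Real.sqrt (Real.exp 1) = Real.exp 1 :=
          Real.mul_self_sqrt (Real.exp_pos 1).le
        calc 8 * ((k ! : ℝ) * (Real.sqrt (Real.exp 1) * Real.sqrt ((k:ℝ)^k)))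
              * Real.sqrt (Real.exp 1)
            = 8 * ((Real.sqrt (Real.exp 1) * Real.sqrt (Real.exp 1))
                * ((k ! : ℝ) * Real.sqrt ((k:ℝ)^k))) := by ring
          _ = 8 * (Real.exp 1 * (k ! : ℝ) * Real.sqrt ((k:ℝ)^k)) := by
              rw [hsqsq]; ring
          _ ≤ 8 * ((3 * ((k : ℝ) + 1) / 2) ^ (3 * ((k : ℝ) + 1) / 2)) :=
              mul_le_mul_of_nonneg_left hfin (by norm_num)
          _ = 8 * (3 * ((k : ℝ) + 1) / 2) ^ (3 * ((k : ℝ) + 1) / 2) := by ring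
end

section
/- Let F : ℝ^d → ℝ be twice differentiable with L₂-Lipschitz Hessian. Fix x', x ∈ ℝ^d and K ∈ ℕ with K ≥ 1, and define the equispaced points x^{(k)} := x' + (k/K)(x − x') for k = 0, 1, …, K. Then ‖∇F(x) − ∇F(x') − Σ_{k=1}^K ∇²F(x^{(k−1)})(x^{(k)} − x^{(k−1)})‖ ≤ (L₂/(2K))·‖x − x'‖². -/
open Set

/-- Quadratic Taylor bound: if `g` has Lipschitz-type derivative `H`, then
`‖g b - g a - H a (b - a)‖ ≤ L/2 * ‖b - a‖²`. -/
theorem taylor_bound {E F : Type*} [NormedAddCommGroup E] [NormedSpace ℝ E]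
    [NormedAddCommGroup F] [NormedSpace ℝ F]
    (g : E → F) (H : E → E →L[ℝ] F) (L : ℝ)
    (hg : ∀ z, HasFDerivAt g (H z) z)
    (hlip : ∀ z w, ‖H z - H w‖ ≤ L * ‖z - w‖)
    (a b : E) :
    ‖g b - g a - H a (b - a)‖ ≤ L / 2 * ‖b - a‖ ^ 2 := by
  set v := b - a with hv
  set f : ℝ → F := fun t => g (a + t • v) - t • (H a v) with hf
  set f' : ℝ → F := fun t => H (a + t • v) v - H a v with hf'
  have hfd : ∀ t : ℝ, HasDerivAt f (f' t) t := by
    intro t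
    have h1 : HasDerivAt (fun t : ℝ => a + t • v) v t := by
      simpa using ((hasDerivAt_id t).smul_const v).const_add a
    have h2 : HasDerivAt (fun t : ℝ => g (a + t • v)) (H (a + t • v) v) t :=
      (hg (a + t • v)).comp_hasDerivAt t h1
    simpa [hf, hf'] using h2.fun_sub ((hasDerivAt_id t).smul_const (H a v))
  set B : ℝ → ℝ := fun t => L / 2 * ‖v‖ ^ 2 * t ^ 2 with hB
  set B' : ℝ → ℝ := fun t => L * ‖v‖ ^ 2 * t with hB'
  have hBd : ∀ t : ℝ, HasDerivAt B (B' t) t := by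
    intro t
    have := ((hasDerivAt_pow 2 t).const_mul (L / 2 * ‖v‖ ^ 2))
    convert this using 1
    show L * ‖v‖ ^ 2 * t = _
    rw [show (2:ℕ) - 1 = 1 from rfl]; push_cast; ring
    all_goals rfl
  have key : ∀ t ∈ Icc (0:ℝ) 1, ‖f t - f 0‖ ≤ B t := by
    have := image_norm_le_of_norm_deriv_right_le_deriv_boundary
      (f := fun t => f t - f 0) (f' := f') (a := 0) (b := 1)
      (fun t _ => ((hfd t).sub_const (f 0)).continuousAt.continuousWithinAt)
      (fun t _ => ((hfd t).sub_const (f 0)).hasDerivWithinAt)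
      (by simp [hB]) hBd
      ?_
    · exact fun t ht => this ht
    · intro t ht
      have h1 : ‖f' t‖ ≤ ‖H (a + t • v) - H a‖ * ‖v‖ := by
        simpa [hf'] using (H (a + t • v) - H a).le_opNorm v
      have h2 : ‖H (a + t • v) - H a‖ ≤ L * (t * ‖v‖) := by
        calc ‖H (a + t • v) - H a‖ ≤ L * ‖a + t • v - a‖ := hlip _ _
        _ = L * (|t| * ‖v‖) := by simp [norm_smul]
        _ = L * (t * ‖v‖) := by rw [abs_of_nonneg ht.1]
      calc ‖f' t‖ ≤ L * (t * ‖v‖) * ‖v‖ := by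
            refine h1.trans (mul_le_mul_of_nonneg_right h2 (norm_nonneg _))
        _ = B' t := by simp [hB']; ring
  have h := key 1 (by norm_num)
  have e : f 1 - f 0 = g b - g a - H a (b - a) := by
    simp only [hf, hv, one_smul, zero_smul, add_zero, zero_smul, sub_zero,
      add_sub_cancel]
    abel
  rw [e] at h
  simpa [hB, hv] using h


/-- The `k`-th of `K` equispaced points on the segment from `x'` to `x`:
`x^{(k)} = x' + (k/K)(x - x')`. -/
noncomputable def pt {d : ℕ} (x' x : EuclideanSpace ℝ (Fin d)) (K : ℕ) (k : ℕ) :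
    EuclideanSpace ℝ (Fin d) :=
  x' + ((k : ℝ) / K) • (x - x')

/-- Bias of the Riemann-sum Hessian-vector-product approximation of a
gradient difference: if `F` has an `L₂`-Lipschitz Hessian, then
`‖∇F(x) - ∇F(x') - ∑_{k=1}^K ∇²F(x^{(k-1)})(x^{(k)} - x^{(k-1)})‖ ≤ (L₂/(2K))‖x - x'‖²`. -/
theorem stmt_17 {d : ℕ} (F : EuclideanSpace ℝ (Fin d) → ℝ)
    (gradF : EuclideanSpace ℝ (Fin d) → EuclideanSpace ℝ (Fin d))
    (hessF : EuclideanSpace ℝ (Fin d) →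
      EuclideanSpace ℝ (Fin d) →L[ℝ] EuclideanSpace ℝ (Fin d))
    (L₂ : ℝ)
    (hgrad : ∀ z, HasGradientAt F (gradF z) z)
    (hhess : ∀ z, HasFDerivAt gradF (hessF z) z)
    (hlip : ∀ z w, ‖hessF z - hessF w‖ ≤ L₂ * ‖z - w‖)
    (x' x : EuclideanSpace ℝ (Fin d)) (K : ℕ) (hK : 1 ≤ K) :
    ‖gradF x - gradF x' -
        ∑ k ∈ Finset.range K,
          hessF (pt x' x K k) (pt x' x K (k + 1) - pt x' x K k)‖
      ≤ L₂ / (2 * K) * ‖x - x'‖ ^ 2 := by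
  have hK0 : (K : ℝ) ≠ 0 := Nat.cast_ne_zero.mpr (by omega)
  have hpt0 : pt x' x K 0 = x' := by simp [pt]
  have hptK : pt x' x K K = x := by
    simp [pt, div_self hK0]
  have hdiff : ∀ k : ℕ, pt x' x K (k + 1) - pt x' x K k = ((1 : ℝ) / K) • (x - x') := by
    intro k
    simp only [pt, add_sub_add_left_eq_sub, ← sub_smul]
    congr 1
    push_cast
    field_simp
    ring
  have htel : gradF x - gradF x' =
      ∑ k ∈ Finset.range K, (gradF (pt x' x K (k + 1)) - gradF (pt x' x K k)) := by
    rw [Finset.sum_range_sub (fun k => gradF (pt x' x K k)) K, hpt0, hptK]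
  rw [htel, ← Finset.sum_sub_distrib]
  have hterm : ∀ k ∈ Finset.range K,
      ‖gradF (pt x' x K (k + 1)) - gradF (pt x' x K k) -
        hessF (pt x' x K k) (pt x' x K (k + 1) - pt x' x K k)‖
      ≤ L₂ / 2 * (‖x - x'‖ / K) ^ 2 := by
    intro k _
    have := taylor_bound gradF hessF L₂ hhess hlip (pt x' x K k) (pt x' x K (k + 1))
    refine this.trans_eq ?_
    rw [hdiff k, norm_smul, Real.norm_eq_abs,
      abs_of_nonneg (by positivity : (0:ℝ) ≤ 1 / (K:ℝ))]
    ring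
  calc ‖∑ k ∈ Finset.range K, (gradF (pt x' x K (k + 1)) - gradF (pt x' x K k) -
          hessF (pt x' x K k) (pt x' x K (k + 1) - pt x' x K k))‖
      ≤ ∑ k ∈ Finset.range K, ‖gradF (pt x' x K (k + 1)) - gradF (pt x' x K k) -
          hessF (pt x' x K k) (pt x' x K (k + 1) - pt x' x K k)‖ := norm_sum_le _ _
    _ ≤ ∑ k ∈ Finset.range K, L₂ / 2 * (‖x - x'‖ / K) ^ 2 := Finset.sum_le_sum hterm
    _ = K * (L₂ / 2 * (‖x - x'‖ / K) ^ 2) := by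
        rw [Finset.sum_const, Finset.card_range, nsmul_eq_mul]
    _ = L₂ / (2 * K) * ‖x - x'‖ ^ 2 := by field_simp
end
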